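/- arXiv:1911.08004 — 7 statements merged into one kernel-verified Lean document; each statement's English description precedes it below -/
import Mathlib

section
/- For all integers n, k with 1 ≤ k ≤ n and all Δ ≥ 0, the number of 2k-NN graphs at Hamming distance exactly 2Δ from x* satisfies |X_Δ| ≤ (4kn)^Δ. -/
open MeasureTheory Filter
open scoped ENNReal NNReal

noncomputable section

/-- Cyclic distance on `ZMod n`: `min(m, n-m)` where `m` is the representative of `a-b`. -/
def cycDist {n : ℕ} (a b : ZMod n) : ℕ := min (a - b).val (b - a).val

/-- The `2k`-nearest-neighbor graph on `ZMod n` associated to a permutation `σ`. -/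
def knnGraph (n k : ℕ) (σ : Equiv.Perm (ZMod n)) : SimpleGraph (ZMod n) where
  Adj u v := u ≠ v ∧ cycDist (σ.symm u) (σ.symm v) ≤ k
  symm := by
    constructor
    intro u v h
    refine ⟨h.1.symm, ?_⟩
    unfold cycDist at *
    omega
  loopless := by constructor; intro u h; exact h.1 rfl

/-- The set of all `2k`-NN graphs on `ZMod n`. -/
def knnGraphs (n k : ℕ) : Set (SimpleGraph (ZMod n)) := Set.range (knnGraph n k)

/-- The hidden `2k`-NN graph: the one associated to the identity permutation. -/
def xstar (n k : ℕ) : SimpleGraph (ZMod n) := knnGraph n k (Equiv.refl _)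

/-- Hamming distance between two graphs: the number of unordered pairs adjacent in
exactly one of them. -/
def gdist {n : ℕ} (x y : SimpleGraph (ZMod n)) : ℕ := (symmDiff x.edgeSet y.edgeSet).ncard

/-- `2k`-NN graphs at Hamming distance `2Δ` from the hidden one. -/
def XDelta (n k Δ : ℕ) : Set (SimpleGraph (ZMod n)) :=
  {x | x ∈ knnGraphs n k ∧ gdist x (xstar n k) = 2 * Δ}

open scoped Classical in
/-- The hidden `2k`-NN graph model: independent edge weights, with law `P` on the edges of
the hidden graph `x` and law `Q` elsewhere. -/
def edgeMeasure (n : ℕ) (P Q : Measure ℝ) (x : SimpleGraph (ZMod n)) :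
    Measure (Sym2 (ZMod n) → ℝ) :=
  if h : n = 0 then 0 else
    haveI : NeZero n := ⟨h⟩
    Measure.pi fun e => if e ∈ x.edgeSet then P else Q

/-- `⟨L, x⟩ = Σ_{e edge of x} log (dP/dQ)(w_e)`. -/
def score (n : ℕ) (P Q : Measure ℝ) (x : SimpleGraph (ZMod n))
    (w : Sym2 (ZMod n) → ℝ) : ℝ :=
  ∑ᶠ e ∈ x.edgeSet, llr P Q (w e)

/-- `Σ_{e edge of x} w_e`. -/
def wsum (n : ℕ) (x : SimpleGraph (ZMod n)) (w : Sym2 (ZMod n) → ℝ) : ℝ :=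
  ∑ᶠ e ∈ x.edgeSet, w e

/-- The order-1/2 Rényi divergence `α(P,Q) = -2 log ∫ √(dP/dQ) dQ`. -/
def renyiHalf (P Q : Measure ℝ) : ℝ :=
  -2 * Real.log (∫ t, Real.sqrt ((P.rnDeriv Q) t).toReal ∂Q)

/-- The Kullback-Leibler divergence `D(P‖Q) = ∫ log (dP/dQ) dP`. -/
def klDivR (P Q : Measure ℝ) : ℝ := ∫ t, llr P Q t ∂P



section AuxCounting

open Finset SimpleGraph
open scoped Classical

set_option linter.unusedSectionVars false
set_option maxHeartbeats 1000000

/-- perfect matchings (as finsets of non-diagonal pairs) covering a finset `T`. -/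
def pmSet {W : Type*} (T : Finset W) : Finset (Finset (Sym2 W)) :=
  (T.sym2.powerset).filter
    (fun M => (∀ e ∈ M, ¬ e.IsDiag) ∧ ∀ w ∈ T, ∃! e, e ∈ M ∧ w ∈ e)

/-- double factorial style bound -/
def ffun : ℕ → ℕ
  | 0 => 1
  | d + 1 => (2 * d + 1) * ffun d

lemma mem_of_mem_sym2 {W : Type*} {T : Finset W} {e : Sym2 W} (he : e ∈ T.sym2)
    {w : W} (hw : w ∈ e) : w ∈ T := by
  induction e with
  | _ x y =>
    rw [Finset.mk_mem_sym2_iff] at he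
    rcases Sym2.mem_iff.1 hw with rfl | rfl
    · exact he.1
    · exact he.2

lemma pmSet_card_le {W : Type*} : ∀ (d : ℕ) (T : Finset W), T.card = 2 * d →
    (pmSet T).card ≤ ffun d := by
  intro d
  induction d with
  | zero =>
    intro T hT
    rw [Finset.card_eq_zero] at hT
    subst hT
    have : pmSet (∅ : Finset W) ⊆ {∅} := by
      intro M hM
      simp only [pmSet, Finset.sym2_empty, Finset.mem_filter, Finset.powerset_empty,
        Finset.mem_singleton] at hM ⊢
      exact hM.1
    simpa [ffun] using Finset.card_le_card this
  | succ d ih =>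
    intro T hT
    have hne : T.Nonempty := by
      rw [← Finset.card_pos, hT]; omega
    obtain ⟨w₀, hw₀⟩ := hne
    have hsub : pmSet T ⊆ (T.erase w₀).biUnion
        (fun b => (pmSet ((T.erase w₀).erase b)).image (fun M => insert s(w₀, b) M)) := by
      intro M hM
      simp only [pmSet, Finset.mem_filter, Finset.mem_powerset] at hM
      obtain ⟨hMsub, hdiag, hcov⟩ := hM
      obtain ⟨e₀, ⟨he₀M, hw₀e₀⟩, huniq⟩ := hcov w₀ hw₀
      obtain ⟨b, rfl⟩ := Sym2.mem_iff_exists.1 hw₀e₀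
      have hbne : b ≠ w₀ := by
        intro h; subst h; exact hdiag _ he₀M (Sym2.mk_isDiag_iff.2 rfl)
      have hbT : b ∈ T := mem_of_mem_sym2 (hMsub he₀M) (Sym2.mem_mk_right _ _)
      have hbmem : b ∈ T.erase w₀ := Finset.mem_erase.2 ⟨hbne, hbT⟩
      refine Finset.mem_biUnion.2 ⟨b, hbmem, Finset.mem_image.2 ⟨M.erase s(w₀, b), ?_, ?_⟩⟩
      · -- M.erase e₀ ∈ pmSet of smaller set
        set T'' := (T.erase w₀).erase b with hT''
        have hmem_T'' : ∀ {e : Sym2 W}, e ∈ M.erase s(w₀, b) → ∀ {w : W}, w ∈ e → w ∈ T'' := by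
          intro e he w hwe
          have heM : e ∈ M := Finset.mem_of_mem_erase he
          have hene : e ≠ s(w₀, b) := Finset.ne_of_mem_erase he
          have hwT : w ∈ T := mem_of_mem_sym2 (hMsub heM) hwe
          have hww₀ : w ≠ w₀ := by
            intro h; subst h
            exact hene (huniq e ⟨heM, hwe⟩)
          have hwb : w ≠ b := by
            intro h; subst h
            obtain ⟨e', ⟨he'M, hbe'⟩, huniq'⟩ := hcov w hwT
            have h1 : e = e' := (huniq' e ⟨heM, hwe⟩)
            have h2 : s(w₀, w) = e' := (huniq' s(w₀, w) ⟨he₀M, Sym2.mem_mk_right _ _⟩)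
            exact hene (h1.trans h2.symm)
          exact Finset.mem_erase.2 ⟨hwb, Finset.mem_erase.2 ⟨hww₀, hwT⟩⟩
        simp only [pmSet, Finset.mem_filter, Finset.mem_powerset]
        refine ⟨?_, ?_, ?_⟩
        · intro e he
          induction e with
          | _ x y =>
            exact Finset.mk_mem_sym2_iff.2
              ⟨hmem_T'' he (Sym2.mem_mk_left _ _), hmem_T'' he (Sym2.mem_mk_right _ _)⟩
        · intro e he; exact hdiag e (Finset.mem_of_mem_erase he)
        · intro w hwT''
          have hwT : w ∈ T := Finset.mem_of_mem_erase (Finset.mem_of_mem_erase hwT'')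
          have hww₀ : w ≠ w₀ := Finset.ne_of_mem_erase (Finset.mem_of_mem_erase hwT'')
          have hwb : w ≠ b := Finset.ne_of_mem_erase hwT''
          obtain ⟨e, ⟨heM, hwe⟩, huniq'⟩ := hcov w hwT
          have hene : e ≠ s(w₀, b) := by
            intro h; subst h
            rcases Sym2.mem_iff.1 hwe with h | h
            · exact hww₀ h
            · exact hwb h
          refine ⟨e, ⟨Finset.mem_erase.2 ⟨hene, heM⟩, hwe⟩, ?_⟩
          intro e' ⟨he', hwe'⟩
          exact huniq' e' ⟨Finset.mem_of_mem_erase he', hwe'⟩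
      · exact Finset.insert_erase he₀M
    calc (pmSet T).card ≤ _ := Finset.card_le_card hsub
      _ ≤ ∑ b ∈ T.erase w₀, ((pmSet ((T.erase w₀).erase b)).image (fun M => insert s(w₀, b) M)).card :=
          Finset.card_biUnion_le
      _ ≤ ∑ b ∈ T.erase w₀, ffun d := by
          refine Finset.sum_le_sum ?_
          intro b hb
          refine le_trans (Finset.card_image_le) (ih _ ?_)
          rw [Finset.card_erase_of_mem hb, Finset.card_erase_of_mem hw₀, hT]
          omega
      _ = (2 * d + 1) * ffun d := by
          rw [Finset.sum_const, Finset.card_erase_of_mem hw₀, hT, smul_eq_mul]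
          have h2 : 2 * (d + 1) - 1 = 2 * d + 1 := by omega
          rw [h2]
      _ = ffun (d + 1) := rfl

lemma ffun_le (d : ℕ) : ffun d ≤ 4 ^ d * d.factorial := by
  induction d with
  | zero => simp [ffun]
  | succ d ih =>
    calc ffun (d+1) = (2*d+1) * ffun d := rfl
      _ ≤ (2*d+1) * (4^d * d.factorial) := Nat.mul_le_mul_left _ ih
      _ ≤ (4*(d+1)) * (4^d * d.factorial) := Nat.mul_le_mul_right _ (by omega)
      _ = 4^(d+1) * (d+1).factorial := by
        rw [Nat.factorial_succ, pow_succ]; ring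


variable {V : Type*} [Fintype V] [DecidableEq V]

lemma iso_filter_card {G H : SimpleGraph V} [Fintype G.edgeSet] [Fintype H.edgeSet]
    (f : G ≃g H) (v : V) :
    (H.edgeFinset.filter (fun e => f v ∈ e)).card
      = (G.edgeFinset.filter (fun e => v ∈ e)).card := by
  refine Finset.card_bij' (fun e _ => Sym2.map f.symm e) (fun e _ => Sym2.map f e)
    ?_ ?_ ?_ ?_
  · intro e he
    simp only [Finset.mem_filter, mem_edgeFinset] at he ⊢
    obtain ⟨he1, he2⟩ := he
    constructor
    · induction e with
      | _ x y =>
        rw [mem_edgeSet] at he1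
        rw [Sym2.map_pair_eq, mem_edgeSet]
        exact f.symm.map_rel_iff.2 he1
    · rw [Sym2.mem_map]
      exact ⟨f v, he2, f.symm_apply_apply v⟩
  · intro e he
    simp only [Finset.mem_filter, mem_edgeFinset] at he ⊢
    obtain ⟨he1, he2⟩ := he
    constructor
    · induction e with
      | _ x y =>
        rw [mem_edgeSet] at he1
        rw [Sym2.map_pair_eq, mem_edgeSet]
        exact f.map_rel_iff.2 he1
    · rw [Sym2.mem_map]
      exact ⟨v, he2, rfl⟩
  · intro e _
    rw [Sym2.map_map]
    have h : (⇑f ∘ ⇑f.symm) = id := by ext w; simp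
    rw [h, Sym2.map_id, id_eq]
  · intro e _
    rw [Sym2.map_map]
    have h : (⇑f.symm ∘ ⇑f) = id := by ext w; simp
    rw [h, Sym2.map_id, id_eq]

def stubs (R : Finset (Sym2 V)) : Finset (Sym2 V × V) :=
  Finset.univ.filter (fun p : Sym2 V × V => p.1 ∈ R ∧ p.2 ∈ p.1)

lemma stubs_card {R : Finset (Sym2 V)} (hd : ∀ e ∈ R, ¬ e.IsDiag) :
    (stubs R).card = 2 * R.card := by
  have h : stubs R = R.biUnion
      (fun e => (Finset.univ.filter (fun v => v ∈ e)).image (fun v => (e, v))) := by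
    ext p
    simp only [stubs, Finset.mem_filter, Finset.mem_univ, true_and, Finset.mem_biUnion,
      Finset.mem_image]
    constructor
    · rintro ⟨h1, h2⟩
      exact ⟨p.1, h1, p.2, by simp [h2], rfl⟩
    · rintro ⟨e, he, v, hv, rfl⟩
      simp only at hv ⊢
      exact ⟨he, by simpa using hv⟩
  rw [h, Finset.card_biUnion]
  · rw [Finset.sum_congr rfl (g := fun _ => 2), Finset.sum_const, smul_eq_mul, mul_comm]
    intro e he
    rw [Finset.card_image_of_injective _ (fun a b hab => by injection hab)]
    have hde := hd e he
    induction e with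
    | _ x y =>
      have hxy : x ≠ y := fun h => hde (Sym2.mk_isDiag_iff.2 h)
      have : Finset.univ.filter (fun v => v ∈ s(x, y)) = {x, y} := by
        ext v
        simp [Sym2.mem_iff]
      rw [this, Finset.card_insert_of_notMem (by simpa using hxy), Finset.card_singleton]
  · intro e₁ h₁ e₂ h₂ hne
    simp only [Finset.disjoint_left, Finset.mem_image, Finset.mem_filter]
    rintro p ⟨v, hv, rfl⟩ ⟨w, hw, hpw⟩
    exact hne (by injection hpw.symm)

lemma exists_pm {A R : Finset (Sym2 V)}
    (hAd : ∀ e ∈ A, ¬ e.IsDiag)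
    (hcard : ∀ v : V, (A.filter (fun e => v ∈ e)).card = (R.filter (fun e => v ∈ e)).card) :
    ∃ M ∈ pmSet (stubs R), A = M.image (Sym2.map Prod.snd) := by
  have φ : ∀ v : V, {e // e ∈ A.filter (fun e => v ∈ e)} ≃ {e // e ∈ R.filter (fun e => v ∈ e)} :=
    fun v => Finset.equivOfCardEq (hcard v)
  let stf : ∀ (a : Sym2 V), a ∈ A → ∀ (u : V), u ∈ a → Sym2 V :=
    fun a ha u hu => ((φ u) ⟨a, Finset.mem_filter.2 ⟨ha, hu⟩⟩).1
  have stf_mem : ∀ a ha u hu, stf a ha u hu ∈ R ∧ u ∈ stf a ha u hu := by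
    intro a ha u hu
    have := ((φ u) ⟨a, Finset.mem_filter.2 ⟨ha, hu⟩⟩).2
    rw [Finset.mem_filter] at this
    exact this
  have stf_inj : ∀ a ha u hu a' ha' hu', stf a ha u hu = stf a' ha' u hu' → a = a' := by
    intro a ha u hu a' ha' hu' h
    have := (φ u).injective (Subtype.ext h)
    exact congrArg Subtype.val this
  have stf_surj : ∀ r ∈ R, ∀ u ∈ r, ∃ a, ∃ (ha : a ∈ A) (hu : u ∈ a), stf a ha u hu = r := by
    intro r hr u hu
    obtain ⟨x, hx⟩ := (φ u).surjective ⟨r, Finset.mem_filter.2 ⟨hr, hu⟩⟩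
    have hxA := x.2
    rw [Finset.mem_filter] at hxA
    refine ⟨x.1, hxA.1, hxA.2, ?_⟩
    show ((φ u) ⟨x.1, Finset.mem_filter.2 ⟨hxA.1, hxA.2⟩⟩).1 = r
    rw [Subtype.coe_eta, hx]
  -- the matched pair associated to an edge of A
  let pa : {e // e ∈ A} → Sym2 (Sym2 V × V) := fun a =>
    s( (stf a.1 a.2 (Quot.out a.1).1 (Sym2.out_fst_mem a.1), (Quot.out a.1).1),
       (stf a.1 a.2 (Quot.out a.1).2 (Sym2.out_snd_mem a.1), (Quot.out a.1).2) )
  have out_ne : ∀ (a : Sym2 V), a ∈ A → (Quot.out a).1 ≠ (Quot.out a).2 := by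
    intro a ha hc
    apply hAd a ha
    rw [← a.out_eq, Sym2.mk_isDiag_iff]
    exact hc
  have stub_mem_pa : ∀ (a : Sym2 V) (ha : a ∈ A) (u : V) (hu : u ∈ a),
      (stf a ha u hu, u) ∈ pa ⟨a, ha⟩ := by
    intro a ha u hu
    have h := hu
    rw [← a.out_eq, Sym2.mem_iff] at h
    rcases h with h | h
    · subst h
      exact Sym2.mem_mk_left _ _
    · subst h
      exact Sym2.mem_mk_right _ _
  set M : Finset (Sym2 (Sym2 V × V)) := A.attach.image pa with hM
  refine ⟨M, ?_, ?_⟩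
  · simp only [pmSet, Finset.mem_filter, Finset.mem_powerset]
    refine ⟨?_, ?_, ?_⟩
    ·
      intro e he
      rw [hM, Finset.mem_image] at he
      obtain ⟨a, _, rfl⟩ := he
      rw [Finset.mk_mem_sym2_iff]
      constructor
      · simp only [stubs, Finset.mem_filter, Finset.mem_univ, true_and]
        exact stf_mem a.1 a.2 (Quot.out a.1).1 (Sym2.out_fst_mem a.1)
      · simp only [stubs, Finset.mem_filter, Finset.mem_univ, true_and]
        exact stf_mem a.1 a.2 (Quot.out a.1).2 (Sym2.out_snd_mem a.1)
    · -- non diagonal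
      intro e he
      rw [hM, Finset.mem_image] at he
      obtain ⟨a, _, rfl⟩ := he
      rw [Sym2.mk_isDiag_iff]
      intro h
      exact out_ne a.1 a.2 (congrArg Prod.snd h)
    ·
      rintro ⟨r, u⟩ hp
      simp only [stubs, Finset.mem_filter, Finset.mem_univ, true_and] at hp
      obtain ⟨hrR, hur⟩ := hp
      obtain ⟨a, ha, hu, hstf⟩ := stf_surj r hrR u hur
      refine ⟨pa ⟨a, ha⟩, ⟨Finset.mem_image.2 ⟨⟨a, ha⟩, Finset.mem_attach _ _, rfl⟩, ?_⟩, ?_⟩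
      · subst hstf
        exact stub_mem_pa a ha u hu
      · rintro e ⟨heM, hue⟩
        rw [hM, Finset.mem_image] at heM
        obtain ⟨a', _, rfl⟩ := heM
        rw [Sym2.mem_iff] at hue
        have key : a'.1 = a := by
          rcases hue with h | h
          · have h1 : u = (Quot.out a'.1).1 := congrArg Prod.snd h
            have h2 : r = stf a'.1 a'.2 (Quot.out a'.1).1 (Sym2.out_fst_mem a'.1) :=
              congrArg Prod.fst h
            subst h1
            exact stf_inj a'.1 a'.2 (Quot.out a'.1).1 (Sym2.out_fst_mem a'.1) a ha hu
              (h2.symm.trans hstf.symm)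
          · have h1 : u = (Quot.out a'.1).2 := congrArg Prod.snd h
            have h2 : r = stf a'.1 a'.2 (Quot.out a'.1).2 (Sym2.out_snd_mem a'.1) :=
              congrArg Prod.fst h
            subst h1
            exact stf_inj a'.1 a'.2 (Quot.out a'.1).2 (Sym2.out_snd_mem a'.1) a ha hu
              (h2.symm.trans hstf.symm)
        have : a' = ⟨a, ha⟩ := Subtype.ext key
        rw [this]
  · -- A = image of M
    rw [hM, Finset.image_image]
    have : (Sym2.map Prod.snd ∘ pa) = fun a => a.1 := by
      funext a
      simp only [Function.comp_apply, pa, Sym2.map_pair_eq]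
      exact a.1.out_eq
    rw [this]
    exact (Finset.attach_image_val).symm

def knnIso (n k : ℕ) (σ : Equiv.Perm (ZMod n)) : xstar n k ≃g knnGraph n k σ := by
  refine ⟨σ, ?_⟩
  intro a b
  simp only [knnGraph, xstar, Equiv.symm_apply_apply, Equiv.refl_symm, Equiv.refl_apply,
    EmbeddingLike.apply_eq_iff_eq, ne_eq]

def transIso (n k : ℕ) (c : ZMod n) : xstar n k ≃g xstar n k := by
  refine ⟨Equiv.addRight c, ?_⟩
  intro a b
  simp only [xstar, knnGraph, Equiv.coe_addRight, Equiv.refl_symm, Equiv.refl_apply, cycDist,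
    add_sub_add_right_eq_sub, ne_eq, add_left_inj]

lemma xstar_card_le (n k : ℕ) [NeZero n] [Fintype ((xstar n k).edgeSet)] :
    (xstar n k).edgeFinset.card ≤ k * n := by
  have hsub : (xstar n k).edgeFinset ⊆
      ((Finset.univ : Finset (ZMod n)) ×ˢ Finset.Icc 1 k).image
        (fun p => s(p.1, p.1 + (p.2 : ZMod n))) := by
    intro e he
    rw [mem_edgeFinset] at he
    induction e with
    | _ u w =>
      rw [mem_edgeSet] at he
      obtain ⟨hne, hd⟩ := he
      simp only [xstar, knnGraph, Equiv.refl_symm, Equiv.refl_apply, cycDist] at hd ⊢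
      rw [Finset.mem_image]
      rcases min_le_iff.mp hd with h | h
      · -- (u - w).val ≤ k : e = s(w, w + (u-w))
        refine ⟨(w, (u - w).val), ?_, ?_⟩
        · simp only [Finset.mem_product, Finset.mem_univ, true_and, Finset.mem_Icc]
          refine ⟨?_, h⟩
          rw [Nat.one_le_iff_ne_zero]
          intro h0
          exact hne (by rwa [ZMod.val_eq_zero, sub_eq_zero] at h0)
        · simp only
          rw [ZMod.natCast_val, ZMod.cast_id]
          rw [add_sub_cancel]
          exact Sym2.eq_swap
      · refine ⟨(u, (w - u).val), ?_, ?_⟩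
        · simp only [Finset.mem_product, Finset.mem_univ, true_and, Finset.mem_Icc]
          refine ⟨?_, h⟩
          rw [Nat.one_le_iff_ne_zero]
          intro h0
          exact hne (by rw [ZMod.val_eq_zero, sub_eq_zero] at h0; exact h0.symm)
        · simp only
          rw [ZMod.natCast_val, ZMod.cast_id, add_sub_cancel]
  calc (xstar n k).edgeFinset.card ≤ _ := Finset.card_le_card hsub
    _ ≤ ((Finset.univ : Finset (ZMod n)) ×ˢ Finset.Icc 1 k).card := Finset.card_image_le
    _ = n * k := by
        rw [Finset.card_product, Finset.card_univ, ZMod.card, Nat.card_Icc]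
        simp
    _ = k * n := Nat.mul_comm n k

end AuxCounting

/-- **Simple counting bound (equation (6)/(8)).**
For all `1 ≤ k ≤ n` and all `Δ ≥ 0`, the number of `2k`-NN graphs at Hamming distance
exactly `2Δ` from `x*` is at most `(4kn)^Δ`. -/
theorem card_XDelta_le_simple (n k Δ : ℕ) (hk : 1 ≤ k) (hkn : k ≤ n) :
    (XDelta n k Δ).ncard ≤ (4 * k * n) ^ Δ := by
  classical
  haveI : NeZero n := ⟨by omega⟩
  letI instE : ∀ G : SimpleGraph (ZMod n), Fintype G.edgeSet := fun _ => Fintype.ofFinite _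
  let EG := (xstar n k).edgeFinset
  let dec : Finset (Sym2 (ZMod n)) × Finset (Sym2 (Sym2 (ZMod n) × ZMod n)) →
      SimpleGraph (ZMod n) :=
    fun c => SimpleGraph.fromEdgeSet ↑((EG \ c.1) ∪ c.2.image (Sym2.map Prod.snd))
  let codes : Finset (Finset (Sym2 (ZMod n)) × Finset (Sym2 (Sym2 (ZMod n) × ZMod n))) :=
    (EG.powersetCard Δ).biUnion (fun R => (pmSet (stubs R)).image (fun M => (R, M)))
  have hsub : XDelta n k Δ ⊆ ↑(codes.image dec) := by
    rintro x ⟨⟨σ, rfl⟩, hg⟩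
    let E := (knnGraph n k σ).edgeFinset
    let R := EG \ E
    let A := E \ EG
    have hEcard : EG.card = E.card := (knnIso n k σ).card_edgeFinset_eq
    -- the symmetric difference has cardinality 2Δ
    have hdisj : Disjoint A R := by
      rw [Finset.disjoint_left]
      intro e heA heR
      exact (Finset.mem_sdiff.1 heA).2 (Finset.mem_sdiff.1 heR).1
    have hgd : A.card + R.card = 2 * Δ := by
      have h1 : symmDiff ((knnGraph n k σ).edgeSet) ((xstar n k).edgeSet) = ↑(A ∪ R) := by
        rw [← SimpleGraph.coe_edgeFinset (knnGraph n k σ),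
          ← SimpleGraph.coe_edgeFinset (xstar n k), symmDiff_def, Finset.coe_union,
          Finset.coe_sdiff, Finset.coe_sdiff]
        rfl
      have h2 : gdist (knnGraph n k σ) (xstar n k) = (A ∪ R).card := by
        rw [gdist, h1, Set.ncard_coe_finset]
      rw [h2, Finset.card_union_of_disjoint hdisj] at hg
      exact hg
    have hgd' : (E \ EG).card + (EG \ E).card = 2 * Δ := hgd
    have c1 := Finset.card_sdiff_add_card_inter E EG
    have c2 := Finset.card_sdiff_add_card_inter EG E
    rw [Finset.inter_comm] at c2
    have hRΔ : R.card = Δ := by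
      show (EG \ E).card = Δ
      omega
    -- incidence counts agree vertex by vertex
    have hinc : ∀ v : ZMod n,
        (E.filter (fun e => v ∈ e)).card = (EG.filter (fun e => v ∈ e)).card := by
      intro v
      have h1 := iso_filter_card (knnIso n k σ) (σ.symm v)
      have hv1 : (knnIso n k σ) (σ.symm v) = v := σ.apply_symm_apply v
      rw [hv1] at h1
      have h2 := iso_filter_card (transIso n k (v - σ.symm v)) (σ.symm v)
      have hv2 : (transIso n k (v - σ.symm v)) (σ.symm v) = v := by
        show σ.symm v + (v - σ.symm v) = v
        abel
      rw [hv2] at h2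
      exact h1.trans h2.symm
    have hARv : ∀ v : ZMod n,
        (A.filter (fun e => v ∈ e)).card = (R.filter (fun e => v ∈ e)).card := by
      intro v
      have e1 : A.filter (fun e => v ∈ e)
          = E.filter (fun e => v ∈ e) \ EG.filter (fun e => v ∈ e) := by
        ext e
        simp only [A, Finset.mem_filter, Finset.mem_sdiff]
        tauto
      have e2 : R.filter (fun e => v ∈ e)
          = EG.filter (fun e => v ∈ e) \ E.filter (fun e => v ∈ e) := by
        ext e
        simp only [R, Finset.mem_filter, Finset.mem_sdiff]
        tauto
      have c1 := Finset.card_sdiff_add_card_inter (E.filter (fun e => v ∈ e))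
        (EG.filter (fun e => v ∈ e))
      have c2 := Finset.card_sdiff_add_card_inter (EG.filter (fun e => v ∈ e))
        (E.filter (fun e => v ∈ e))
      rw [Finset.inter_comm] at c2
      have := hinc v
      rw [e1, e2]
      omega
    have hAd : ∀ e ∈ A, ¬ e.IsDiag := by
      intro e he
      have : e ∈ (knnGraph n k σ).edgeSet := by
        rw [← SimpleGraph.mem_edgeFinset]
        exact (Finset.mem_sdiff.1 he).1
      exact SimpleGraph.not_isDiag_of_mem_edgeSet _ this
    obtain ⟨M, hMpm, hA⟩ := exists_pm hAd hARv
    refine Finset.mem_coe.2 (Finset.mem_image.2 ⟨(R, M), ?_, ?_⟩)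
    · refine Finset.mem_biUnion.2 ⟨R, ?_, Finset.mem_image.2 ⟨M, hMpm, rfl⟩⟩
      exact Finset.mem_powersetCard.2 ⟨Finset.sdiff_subset, hRΔ⟩
    · show SimpleGraph.fromEdgeSet ↑((EG \ R) ∪ M.image (Sym2.map Prod.snd)) = knnGraph n k σ
      rw [← hA]
      have hE : (EG \ R) ∪ A = E := by
        ext e
        simp only [R, A, Finset.mem_union, Finset.mem_sdiff]
        constructor
        · rintro (⟨h1, h2⟩ | ⟨h1, _⟩)
          · by_contra hc
            exact h2 ⟨h1, hc⟩
          · exact h1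
        · intro h
          by_cases hEG : e ∈ EG
          · exact Or.inl ⟨hEG, fun hcontra => hcontra.2 h⟩
          · exact Or.inr ⟨h, hEG⟩
      rw [hE, SimpleGraph.coe_edgeFinset, SimpleGraph.fromEdgeSet_edgeSet]
  -- counting the codes
  have h1 : (XDelta n k Δ).ncard ≤ (codes.image dec).card := by
    rw [← Set.ncard_coe_finset]
    exact Set.ncard_le_ncard hsub (Finset.finite_toSet _)
  have h3 : codes.card ≤ EG.card.choose Δ * ffun Δ := by
    calc codes.card
        ≤ ∑ R ∈ EG.powersetCard Δ, ((pmSet (stubs R)).image (fun M => (R, M))).card :=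
          Finset.card_biUnion_le
      _ ≤ ∑ _R ∈ EG.powersetCard Δ, ffun Δ := by
          refine Finset.sum_le_sum ?_
          intro R hR
          rw [Finset.mem_powersetCard] at hR
          refine le_trans Finset.card_image_le (pmSet_card_le Δ (stubs R) ?_)
          have hd : ∀ e ∈ R, ¬ e.IsDiag := by
            intro e he
            have : e ∈ (xstar n k).edgeSet := by
              rw [← SimpleGraph.mem_edgeFinset]
              exact hR.1 he
            exact SimpleGraph.not_isDiag_of_mem_edgeSet _ this
          rw [stubs_card hd, hR.2]
      _ = EG.card.choose Δ * ffun Δ := by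
          rw [Finset.sum_const, Finset.card_powersetCard, smul_eq_mul]
  have h4 : EG.card ≤ k * n := xstar_card_le n k
  calc (XDelta n k Δ).ncard ≤ (codes.image dec).card := h1
    _ ≤ codes.card := Finset.card_image_le
    _ ≤ EG.card.choose Δ * ffun Δ := h3
    _ ≤ EG.card.choose Δ * (4 ^ Δ * Δ.factorial) := Nat.mul_le_mul_left _ (ffun_le Δ)
    _ = 4 ^ Δ * (EG.card.choose Δ * Δ.factorial) := by ring
    _ ≤ 4 ^ Δ * EG.card ^ Δ := by
        refine Nat.mul_le_mul_left _ ?_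
        calc EG.card.choose Δ * Δ.factorial = EG.card.descFactorial Δ := by
              rw [Nat.descFactorial_eq_factorial_mul_choose]; ring
          _ ≤ EG.card ^ Δ := Nat.descFactorial_le_pow _ _
    _ ≤ 4 ^ Δ * (k * n) ^ Δ := Nat.mul_le_mul_left _ (Nat.pow_le_pow_left h4 Δ)
    _ = (4 * k * n) ^ Δ := by rw [← Nat.mul_pow, Nat.mul_assoc]

end
end

section
/- Suppose k ≥ 2 and n > 2k. Let x ∈ X_{n,k}. Then for every red edge e of x there exists a red edge f of x with f ≠ e such that e and f are nearby, i.e., d(e, f) ≤ 2k, where for edges e = {i, ĩ} and f = {j, j̃} of x*, d(e, f) is the minimum of the four cyclic distances between an endpoint of e and an endpoint of f. -/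
open MeasureTheory Filter
open scoped ENNReal NNReal

noncomputable section

section RedNearbyAux

variable {n : ℕ}

lemma cycDist_self (u : ZMod n) : cycDist u u = 0 := by
  simp [cycDist]

lemma cycDist_comm (u v : ZMod n) : cycDist u v = cycDist v u := by
  simp [cycDist, Nat.min_comm]

lemma cycDist_neg (u v : ZMod n) : cycDist (-u) (-v) = cycDist u v := by
  have h1 : (-u) - (-v) = v - u := by ring
  have h2 : (-v) - (-u) = u - v := by ring
  simp [cycDist, h1, h2, Nat.min_comm]

lemma cycDist_le_iff [NeZero n] (κ : ℕ) (u v : ZMod n) :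
    cycDist u v ≤ κ ↔ ((u - v).val ≤ κ ∨ n - κ ≤ (u - v).val) := by
  by_cases h : u = v
  · subst h; simp [cycDist_self, cycDist]
  · have hne : u - v ≠ 0 := sub_ne_zero_of_ne h
    have hm0 : (u - v).val ≠ 0 := by rwa [Ne, ZMod.val_eq_zero]
    have hmlt : (u - v).val < n := ZMod.val_lt _
    have hvu : (v - u).val = n - (u - v).val := by
      have : v - u = -(u - v) := by ring
      rw [this, ZMod.neg_val, if_neg hne]
    unfold cycDist
    rw [hvu]
    omega

lemma natCast_val_sub [NeZero n] (u v : ZMod n) : (((u - v).val : ℕ) : ZMod n) = u - v :=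
  ZMod.natCast_rightInverse _

lemma cast_eq_cast_iff [NeZero n] {i j : ℕ} (hi : i < n) (hj : j < n) :
    ((i : ZMod n) = (j : ZMod n)) ↔ i = j := by
  constructor
  · intro h
    have := congrArg ZMod.val h
    rwa [ZMod.val_natCast, ZMod.val_natCast, Nat.mod_eq_of_lt hi, Nat.mod_eq_of_lt hj] at this
  · intro h; rw [h]

lemma cast_ne_zero_small [NeZero n] {i : ℕ} (h0 : 0 < i) (hi : i < n) : ((i : ZMod n)) ≠ 0 := by
  intro h
  have : ((i : ZMod n)) = ((0 : ℕ) : ZMod n) := by simpa using h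
  rw [cast_eq_cast_iff hi (by omega)] at this
  omega

lemma neg_offset [NeZero n] (c : ZMod n) {i : ℕ} (hi : i ≤ n) :
    c - (i : ZMod n) = c + ((n - i : ℕ) : ZMod n) := by
  have : ((n - i : ℕ) : ZMod n) = (n : ZMod n) - i := by
    push_cast [Nat.cast_sub hi]; ring
  rw [this, ZMod.natCast_self]; ring

lemma off0 [NeZero n] (κ : ℕ) (c : ZMod n) {i : ℕ} (hi : i < n) :
    cycDist (c + (i : ZMod n)) c ≤ κ ↔ (i ≤ κ ∨ n - κ ≤ i) := by
  rw [cycDist_le_iff]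
  have h1 : c + (i : ZMod n) - c = (i : ZMod n) := by ring
  rw [h1, ZMod.val_natCast, Nat.mod_eq_of_lt hi]

lemma off0' [NeZero n] (κ : ℕ) (c : ZMod n) {i : ℕ} (hi : i < n) :
    cycDist c (c + (i : ZMod n)) ≤ κ ↔ (i ≤ κ ∨ n - κ ≤ i) := by
  rw [cycDist_comm]; exact off0 κ c hi

lemma off_gen [NeZero n] (κ : ℕ) {u v : ZMod n} {i : ℕ} (hi : i < n)
    (h : u - v = (i : ZMod n)) :
    cycDist u v ≤ κ ↔ (i ≤ κ ∨ n - κ ≤ i) := by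
  rw [cycDist_le_iff, h, ZMod.val_natCast, Nat.mod_eq_of_lt hi]

/-- the unique element of `B(c) \ B(c+ε)` is `c - k·ε`. -/
lemma mem_diff_unique [NeZero n] {k : ℕ} (hn : 2*k+2 ≤ n) (hk : 1 ≤ k)
    {ε c w : ZMod n} (hε : ε = 1 ∨ ε = -1)
    (h1 : cycDist w c ≤ k) (h2 : ¬ cycDist w (c + ε) ≤ k) :
    w = c - (k : ZMod n) * ε := by
  have hcast : (((w - c).val : ℕ) : ZMod n) = w - c := natCast_val_sub w c
  have hmlt : (w - c).val < n := ZMod.val_lt _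
  set m := (w - c).val with hmdef
  rw [cycDist_le_iff k w c] at h1
  have hw : w = c + ((m : ℕ) : ZMod n) := by rw [hcast]; ring
  rcases hε with rfl | rfl
  · rw [mul_one]
    by_cases h0 : m = 0
    · exfalso; apply h2
      have hwc : w = c := by rw [hw, h0]; simp
      rw [hwc]
      have hcc : c + 1 = c + ((1:ℕ) : ZMod n) := by norm_num
      rw [hcc, off0' k c (by omega)]
      omega
    · have hsub : w - (c + 1) = ((m - 1 : ℕ) : ZMod n) := by
        have h' : ((m:ℕ) : ZMod n) - 1 = ((m-1 : ℕ) : ZMod n) := by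
          push_cast [Nat.cast_sub (by omega : 1 ≤ m)]; ring
        rw [hw, ← h']; ring
      rw [cycDist_le_iff k w (c+1), hsub, ZMod.val_natCast,
        Nat.mod_eq_of_lt (by omega)] at h2
      push_neg at h2
      have hmval : m = n - k := by omega
      rw [hw, hmval, ← neg_offset c (by omega : k ≤ n)]
  · rw [mul_neg_one, sub_neg_eq_add]
    have hsub : w - (c + (-1)) = ((m + 1 : ℕ) : ZMod n) := by
      have h' : w - (c + (-1)) = (w - c) + 1 := by ring
      rw [h', ← hcast]; push_cast; ring
    by_cases h0 : m + 1 = n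
    · exfalso; apply h2
      rw [cycDist_le_iff k _ _, hsub, h0, ZMod.natCast_self]
      left; simp
    · rw [cycDist_le_iff k _ _, hsub, ZMod.val_natCast,
        Nat.mod_eq_of_lt (by omega)] at h2
      push_neg at h2
      have hmval : m = k := by omega
      rw [hw, hmval]

/-- the closed ball of radius `k` around `v`. -/
def ballF [NeZero n] (k : ℕ) (v : ZMod n) : Finset (ZMod n) :=
  Finset.univ.filter (fun u => cycDist u v ≤ k)

lemma mem_ballF [NeZero n] {k : ℕ} {v u : ZMod n} : u ∈ ballF k v ↔ cycDist u v ≤ k := by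
  simp [ballF]

lemma natCast_mod_self (a : ℕ) : (((a % n : ℕ)) : ZMod n) = (a : ZMod n) := by
  conv_rhs => rw [← Nat.div_add_mod a n]
  push_cast [ZMod.natCast_self]
  ring

lemma card_ballF [NeZero n] {k : ℕ} (hn : 2*k+1 ≤ n) (v : ZMod n) :
    (ballF k v).card = 2*k+1 := by
  rw [show (2*k+1) = (Finset.range (2*k+1)).card by simp]
  apply Finset.card_bij' (fun u _ => ((u - v).val + k) % n)
    (fun j _ => v - (k : ZMod n) + (j : ZMod n))
  · -- maps into range
    intro u hu
    rw [mem_ballF, cycDist_le_iff] at hu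
    have hmlt : (u - v).val < n := ZMod.val_lt _
    simp only [Finset.mem_range]
    rcases hu with h | h
    · rw [Nat.mod_eq_of_lt (by omega)]; omega
    · rw [Nat.mod_eq_sub_mod (by omega), Nat.mod_eq_of_lt (by omega)]; omega
  · -- maps into ball
    intro j hj
    simp only [Finset.mem_range] at hj
    rw [mem_ballF, cycDist_le_iff]
    have hsub : v - (k : ZMod n) + (j : ZMod n) - v = (((j + (n - k)) % n : ℕ) : ZMod n) := by
      rw [natCast_mod_self]
      push_cast [Nat.cast_sub (by omega : k ≤ n), ZMod.natCast_self]
      ring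
    rw [hsub, ZMod.val_natCast, Nat.mod_mod_of_dvd _ dvd_rfl]
    rcases Nat.lt_or_ge j k with h | h
    · rw [Nat.mod_eq_of_lt (by omega)]; omega
    · rw [Nat.mod_eq_sub_mod (by omega), Nat.mod_eq_of_lt (by omega)]; omega
  · -- left inverse
    intro u hu
    rw [mem_ballF, cycDist_le_iff] at hu
    have hmlt : (u - v).val < n := ZMod.val_lt _
    have : ((((u - v).val + k) % n : ℕ) : ZMod n) = (((u - v).val + k : ℕ) : ZMod n) :=
      natCast_mod_self _
    rw [this]
    push_cast [natCast_val_sub]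
    ring
  · -- right inverse
    intro j hj
    simp only [Finset.mem_range] at hj
    have hsub : v - (k : ZMod n) + (j : ZMod n) - v = (((j + (n - k)) % n : ℕ) : ZMod n) := by
      rw [natCast_mod_self]
      push_cast [Nat.cast_sub (by omega : k ≤ n), ZMod.natCast_self]
      ring
    rw [hsub, ZMod.val_natCast, Nat.mod_mod_of_dvd _ dvd_rfl]
    rcases Nat.lt_or_ge j k with h | h
    · have h1 : (j + (n - k)) % n = j + (n - k) := Nat.mod_eq_of_lt (by omega)
      rw [h1]
      have h2 : j + (n - k) + k = j + n := by omega
      rw [h2, Nat.add_mod_right, Nat.mod_eq_of_lt (by omega)]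
    · have h1 : (j + (n - k)) % n = j - k := by
        rw [Nat.mod_eq_sub_mod (by omega), Nat.mod_eq_of_lt (by omega)]
        omega
      rw [h1]
      have h2 : j - k + k = j := by omega
      rw [h2, Nat.mod_eq_of_lt (by omega)]

/-- backward direction from cardinality. -/
lemma star_back [NeZero n] {k : ℕ} (hn : 2*k+1 ≤ n) (τ : ZMod n → ZMod n)
    (hτ : Function.Bijective τ) (v : ZMod n)
    (Hfwd : ∀ u, cycDist u v ≤ k → cycDist (τ u) (τ v) ≤ k) :
    ∀ u, cycDist (τ u) (τ v) ≤ k → cycDist u v ≤ k := by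
  have hsub : (ballF k v).image τ ⊆ ballF k (τ v) := by
    intro w hw
    rw [Finset.mem_image] at hw
    obtain ⟨u, hu, rfl⟩ := hw
    rw [mem_ballF] at hu ⊢
    exact Hfwd u hu
  have hcard : (ballF k (τ v)).card ≤ ((ballF k v).image τ).card := by
    rw [Finset.card_image_of_injective _ hτ.1, card_ballF hn, card_ballF hn]
  have heq := Finset.eq_of_subset_of_card_le hsub hcard
  intro u hu
  have : τ u ∈ (ballF k v).image τ := by
    rw [heq, mem_ballF]; exact hu
  rw [Finset.mem_image] at this
  obtain ⟨u', hu', he⟩ := this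
  rw [hτ.1 he] at hu'
  rwa [mem_ballF] at hu'

lemma step_lemma [NeZero n] {k : ℕ} (hn : 4*k+2 ≤ n) (hk : 2 ≤ k)
    (τ : ZMod n → ZMod n) (hτ : Function.Bijective τ) (v : ZMod n)
    (Hv : ∀ u, cycDist u v ≤ k ↔ cycDist (τ u) (τ v) ≤ k)
    (Hv1 : ∀ u, cycDist u (v+1) ≤ k ↔ cycDist (τ u) (τ (v+1)) ≤ k) :
    ∃ ε : ZMod n, (ε = 1 ∨ ε = -1) ∧ τ (v+1) = τ v + ε ∧
      τ (v + 1 + (k : ZMod n)) = τ v + ε + (k : ZMod n) * ε := by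
  set p := τ v with hp
  set q := τ (v+1) with hq'
  set z := τ (v + 1 + (k : ZMod n)) with hz'
  have harg1 : v + 1 + (k : ZMod n) = (v+1) + ((k : ℕ) : ZMod n) := by push_cast; ring
  have hz1 : cycDist z q ≤ k := by
    rw [← Hv1]
    rw [harg1, off0 k (v+1) (by omega : k < n)]
    left; exact le_rfl
  have hz2 : ¬ cycDist z p ≤ k := by
    intro h
    have h' : cycDist (v + 1 + (k : ZMod n)) v ≤ k := (Hv _).mpr h
    have harg2 : v + 1 + (k : ZMod n) = v + ((k+1 : ℕ) : ZMod n) := by push_cast; ring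
    rw [harg2, off0 k v (by omega : k + 1 < n)] at h'
    omega
  have huniq : ∀ w, cycDist w q ≤ k → ¬ cycDist w p ≤ k → w = z := by
    intro w hw1 hw2
    obtain ⟨u, rfl⟩ := hτ.2 w
    have h1 : cycDist u (v+1) ≤ k := (Hv1 u).mpr hw1
    have h2 : ¬ cycDist u v ≤ k := fun h => hw2 ((Hv u).mp h)
    have h2' : ¬ cycDist u ((v+1) + (-1)) ≤ k := by
      have harg : (v+1) + (-1 : ZMod n) = v := by ring
      rwa [harg]
    have hu := mem_diff_unique (n := n) (k := k) (by omega) (by omega) (Or.inr rfl) h1 h2'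
    have harg : (v+1) - (k : ZMod n) * (-1) = v + 1 + (k : ZMod n) := by ring
    rw [hu, harg]
  have hone : ((1:ℕ) : ZMod n) ≠ ((0:ℕ) : ZMod n) := by
    rw [Ne, cast_eq_cast_iff (by omega) (by omega)]; omega
  have hpq : p ≠ q := by
    intro h
    have hv : v = v + 1 := hτ.1 h
    have : (1 : ZMod n) = 0 := by
      have := hv.symm
      calc (1 : ZMod n) = (v + 1) - v := by ring
      _ = 0 := by rw [← hv]; ring
    apply hone; push_cast; exact this
  have hc0lt : (q - p).val < n := ZMod.val_lt _
  have hc0pos : 0 < (q - p).val := by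
    rcases Nat.eq_zero_or_pos (q - p).val with h | h
    · exfalso
      rw [ZMod.val_eq_zero] at h
      exact hpq (sub_eq_zero.mp h).symm
    · exact h
  set c₀ := (q - p).val with hc₀def
  have hqp : q = p + ((c₀ : ℕ) : ZMod n) := by
    rw [natCast_val_sub]; ring
  have hco : c₀ = 1 ∨ c₀ = n - 1 := by
    by_contra hcontra
    push_neg at hcontra
    have hc2 : 2 ≤ c₀ ∧ c₀ ≤ n - 2 := by omega
    rcases le_or_gt c₀ (n - 2*k - 1) with hcase | hcase
    · -- witnesses q + k, q + (k-1)
      have e1 : q + ((k:ℕ) : ZMod n) = p + ((c₀ + k : ℕ) : ZMod n) := by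
        rw [hqp]; push_cast; ring
      have e2 : q + ((k-1:ℕ) : ZMod n) = p + ((c₀ + (k-1) : ℕ) : ZMod n) := by
        rw [hqp]; push_cast; ring
      have m1 : q + ((k:ℕ) : ZMod n) = z := by
        apply huniq
        · rw [off0 k q (by omega : k < n)]; left; exact le_rfl
        · intro h
          rw [e1, off0 k p (by omega : c₀ + k < n)] at h
          omega
      have m2 : q + ((k-1:ℕ) : ZMod n) = z := by
        apply huniq
        · rw [off0 k q (by omega : k - 1 < n)]; left; omega
        · intro h
          rw [e2, off0 k p (by omega : c₀ + (k-1) < n)] at h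
          omega
      have : ((k:ℕ) : ZMod n) = ((k-1:ℕ) : ZMod n) := by
        have := m1.trans m2.symm
        exact add_left_cancel this
      rw [cast_eq_cast_iff (by omega) (by omega)] at this
      omega
    · -- witnesses q - k, q - (k-1)
      have hkc : k ≤ c₀ := by omega
      have e1 : q - ((k:ℕ) : ZMod n) = p + ((c₀ - k : ℕ) : ZMod n) := by
        rw [hqp]; push_cast [Nat.cast_sub hkc]; ring
      have e2 : q - ((k-1:ℕ) : ZMod n) = p + ((c₀ - (k-1) : ℕ) : ZMod n) := by
        rw [hqp]; push_cast [Nat.cast_sub (by omega : k - 1 ≤ c₀)]; ring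
      have m1 : q - ((k:ℕ) : ZMod n) = z := by
        apply huniq
        · rw [neg_offset q (by omega : k ≤ n), off0 k q (by omega : n - k < n)]
          right; exact le_rfl
        · intro h
          rw [e1, off0 k p (by omega : c₀ - k < n)] at h
          omega
      have m2 : q - ((k-1:ℕ) : ZMod n) = z := by
        apply huniq
        · rw [neg_offset q (by omega : k - 1 ≤ n), off0 k q (by omega : n - (k-1) < n)]
          right; omega
        · intro h
          rw [e2, off0 k p (by omega : c₀ - (k-1) < n)] at h
          omega
      have : ((k:ℕ) : ZMod n) = ((k-1:ℕ) : ZMod n) := by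
        have h12 := m1.trans m2.symm
        have := sub_right_injective h12  -- q - a = q - b → a = b ?
        exact this
      rw [cast_eq_cast_iff (by omega) (by omega)] at this
      omega
  have hcastn1 : ((n - 1 : ℕ) : ZMod n) = -1 := by
    push_cast [Nat.cast_sub (by omega : 1 ≤ n), ZMod.natCast_self]; ring
  rcases hco with hco | hco
  · refine ⟨1, Or.inl rfl, ?_, ?_⟩
    · rw [hqp, hco]; push_cast; ring
    · have hz : q + ((k:ℕ) : ZMod n) = z := by
        apply huniq
        · rw [off0 k q (by omega : k < n)]; left; exact le_rfl
        · intro h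
          have e1 : q + ((k:ℕ) : ZMod n) = p + ((k+1 : ℕ) : ZMod n) := by
            rw [hqp, hco]; push_cast; ring
          rw [e1, off0 k p (by omega : k + 1 < n)] at h
          omega
      rw [← hz, hqp, hco]
      push_cast; ring
  · have hq2 : q = p - 1 := by rw [hqp, hco, hcastn1]; ring
    refine ⟨-1, Or.inr rfl, ?_, ?_⟩
    · rw [hq2]; ring
    · have hz : q - ((k:ℕ) : ZMod n) = z := by
        apply huniq
        · rw [neg_offset q (by omega : k ≤ n), off0 k q (by omega : n - k < n)]
          right; exact le_rfl
        · intro h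
          have e1 : q - ((k:ℕ) : ZMod n) = p + ((n - (k+1) : ℕ) : ZMod n) := by
            rw [hq2, ← neg_offset p (by omega : k + 1 ≤ n)]
            push_cast; ring
          rw [e1, off0 k p (by omega : n - (k+1) < n)] at h
          omega
      rw [← hz, hq2]
      push_cast; ring

lemma run_lemma [NeZero n] {k : ℕ} (hn : 4*k+2 ≤ n) (hk : 2 ≤ k)
    (τ : ZMod n → ZMod n) (hτ : Function.Bijective τ) (c : ZMod n)
    (H : ∀ j : ℕ, 1 ≤ j → j ≤ k+1 →
      ∀ u, cycDist u (c + (j : ZMod n)) ≤ k ↔ cycDist (τ u) (τ (c + (j : ZMod n))) ≤ k) :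
    ∃ ε : ZMod n, (ε = 1 ∨ ε = -1) ∧
      (∀ j : ℕ, 1 ≤ j → j ≤ k+1 →
        τ (c + (j : ZMod n)) = τ (c + 1) + ((j-1 : ℕ) : ZMod n) * ε) ∧
      τ (c + ((k+2 : ℕ) : ZMod n)) = τ (c + 1) + ((k+1 : ℕ) : ZMod n) * ε ∧
      τ (c + ((k+3 : ℕ) : ZMod n)) = τ (c + 1) + ((k+2 : ℕ) : ZMod n) * ε := by
  have hstep : ∀ j : ℕ, 1 ≤ j → j ≤ k → ∃ ε : ZMod n, (ε = 1 ∨ ε = -1) ∧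
      τ (c + ((j+1 : ℕ) : ZMod n)) = τ (c + (j : ZMod n)) + ε ∧
      τ (c + ((j+1+k : ℕ) : ZMod n)) = τ (c + (j : ZMod n)) + ε + (k : ZMod n) * ε := by
    intro j h1 h2
    have harg : c + (j : ZMod n) + 1 = c + ((j+1 : ℕ) : ZMod n) := by push_cast; ring
    have harg2 : c + (j : ZMod n) + 1 + (k : ZMod n) = c + ((j+1+k : ℕ) : ZMod n) := by
      push_cast; ring
    have Hv1 : ∀ u, cycDist u (c + (j : ZMod n) + 1) ≤ k ↔
        cycDist (τ u) (τ (c + (j : ZMod n) + 1)) ≤ k := by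
      intro u; rw [harg]; exact H (j+1) (by omega) (by omega) u
    obtain ⟨ε, hε, ha, hb⟩ := step_lemma hn hk τ hτ (c + (j : ZMod n))
      (H j h1 (by omega)) Hv1
    exact ⟨ε, hε, by rw [← harg]; exact ha, by rw [← harg2]; exact hb⟩
  obtain ⟨ε, hε, h11, h12⟩ := hstep 1 le_rfl (by omega)
  -- constancy
  have key : ∀ j : ℕ, 1 ≤ j → j ≤ k →
      (τ (c + ((j+1 : ℕ) : ZMod n)) = τ (c + (j : ZMod n)) + ε ∧
       τ (c + ((j+1+k : ℕ) : ZMod n)) = τ (c + (j : ZMod n)) + ε + (k : ZMod n) * ε) := by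
    intro j h1
    induction j, h1 using Nat.le_induction with
    | base => intro _; exact ⟨h11, h12⟩
    | succ j hj ih =>
      intro hjk
      obtain ⟨ih1, _⟩ := ih (by omega)
      obtain ⟨ε', hε', ha, hb⟩ := hstep (j+1) (by omega) hjk
      have hεε : ε' = ε := by
        rcases hε with rfl | rfl <;> rcases hε' with h' | h' <;> try exact h'
        all_goals {
          exfalso
          have hcol : τ (c + ((j+1+1 : ℕ) : ZMod n)) = τ (c + (j : ZMod n)) := by
            rw [ha, ih1, h']; ring
          have := hτ.1 hcol
          have hcast : ((j+1+1 : ℕ) : ZMod n) = ((j : ℕ) : ZMod n) := by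
            have := add_left_cancel this
            exact this
          rw [cast_eq_cast_iff (by omega) (by omega)] at hcast
          omega
        }
      rw [hεε] at ha hb
      exact ⟨ha, hb⟩
  -- the run formula
  have fml : ∀ j : ℕ, 1 ≤ j → j ≤ k+1 →
      τ (c + (j : ZMod n)) = τ (c + 1) + ((j-1 : ℕ) : ZMod n) * ε := by
    intro j h1
    induction j, h1 using Nat.le_induction with
    | base => intro _; norm_num
    | succ j hj ih =>
      intro hjk
      have hrec := (key j hj (by omega)).1
      rw [hrec, ih (by omega)]
      have hc1 : ((j + 1 - 1 : ℕ) : ZMod n) = ((j - 1 : ℕ) : ZMod n) + 1 := by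
        push_cast [Nat.cast_sub (by omega : 1 ≤ j)]
        norm_num
      rw [hc1]; ring
  refine ⟨ε, hε, fml, ?_, ?_⟩
  · have h := (key 1 le_rfl (by omega)).2
    have harg : (1+1+k : ℕ) = (k+2 : ℕ) := by omega
    rw [harg] at h
    rw [h]
    have h1 : τ (c + ((1:ℕ) : ZMod n)) = τ (c + 1) := by norm_num
    rw [h1]
    push_cast; ring
  · have h := (key 2 (by omega) hk).2
    have harg : (2+1+k : ℕ) = (k+3 : ℕ) := by omega
    rw [harg] at h
    rw [h, fml 2 (by omega) (by omega)]
    push_cast; ring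

lemma run_lemma' [NeZero n] {k : ℕ} (hn : 4*k+2 ≤ n) (hk : 2 ≤ k)
    (τ : ZMod n → ZMod n) (hτ : Function.Bijective τ) (c : ZMod n)
    (H : ∀ j : ℕ, 1 ≤ j → j ≤ k+1 →
      ∀ u, cycDist u (c - (j : ZMod n)) ≤ k ↔ cycDist (τ u) (τ (c - (j : ZMod n))) ≤ k) :
    ∃ ε : ZMod n, (ε = 1 ∨ ε = -1) ∧
      (∀ j : ℕ, 1 ≤ j → j ≤ k+1 →
        τ (c - (j : ZMod n)) = τ (c - 1) + ((j-1 : ℕ) : ZMod n) * ε) ∧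
      τ (c - ((k+2 : ℕ) : ZMod n)) = τ (c - 1) + ((k+1 : ℕ) : ZMod n) * ε ∧
      τ (c - ((k+3 : ℕ) : ZMod n)) = τ (c - 1) + ((k+2 : ℕ) : ZMod n) * ε := by
  set τ' : ZMod n → ZMod n := fun u => τ (-u) with hτ'def
  have hneg : Function.Bijective (fun u : ZMod n => -u) := neg_involutive.bijective
  have hτ' : Function.Bijective τ' := hτ.comp hneg
  have hargj : ∀ j : ℕ, -c + (j : ZMod n) = -(c - (j : ZMod n)) := by intro j; ring
  have happ : ∀ w : ZMod n, τ' (-w) = τ w := by intro w; simp [hτ'def]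
  have H' : ∀ j : ℕ, 1 ≤ j → j ≤ k+1 →
      ∀ u, cycDist u (-c + (j : ZMod n)) ≤ k ↔
        cycDist (τ' u) (τ' (-c + (j : ZMod n))) ≤ k := by
    intro j h1 h2 u
    rw [hargj j]
    have hd : cycDist u (-(c - (j : ZMod n))) = cycDist (-u) (c - (j : ZMod n)) := by
      rw [← cycDist_neg (-u) (c - (j : ZMod n)), neg_neg]
    have hd' : τ' (-(c - (j : ZMod n))) = τ (c - (j : ZMod n)) := happ _
    rw [hd, hd']
    exact H j h1 h2 (-u)
  obtain ⟨ε, hε, hfml, hj1, hj2⟩ := run_lemma hn hk τ' hτ' (-c) H'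
  have hc1 : τ' (-c + 1) = τ (c - 1) := by
    have : -c + 1 = -(c - 1) := by ring
    rw [this, happ]
  refine ⟨ε, hε, ?_, ?_, ?_⟩
  · intro j h1 h2
    have := hfml j h1 h2
    rw [hargj j, happ, hc1] at this
    exact this
  · rw [hargj (k+2), happ, hc1] at hj1; exact hj1
  · rw [hargj (k+3), happ, hc1] at hj2; exact hj2

lemma cast_eq_zero_iff_small [NeZero n] {i : ℕ} (hi : i < n) :
    ((i : ℕ) : ZMod n) = 0 ↔ i = 0 := by
  have h := cast_eq_cast_iff (n := n) hi (NeZero.pos n)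
  simpa using h

lemma main_contra [NeZero n] {k : ℕ} (hk : 2 ≤ k) (hbig : 4*k+2 ≤ n)
    (τ : ZMod n → ZMod n) (hτ : Function.Bijective τ) (a b : ZMod n)
    (ht1 : 1 ≤ (b - a).val) (htk : (b - a).val ≤ k)
    (hred : ¬ cycDist (τ a) (τ b) ≤ k)
    (HS : ∀ v, v ≠ a → v ≠ b → (cycDist a v ≤ 2*k ∨ cycDist b v ≤ 2*k) →
      ∀ u, cycDist u v ≤ k ↔ cycDist (τ u) (τ v) ≤ k) : False := by
  set t := (b - a).val with htdef
  have hb : b = a + ((t : ℕ) : ZMod n) := by rw [natCast_val_sub b a]; ring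
  have hred' : ¬ cycDist (τ b) (τ a) ≤ k := by rw [cycDist_comm]; exact hred
  -- left-run membership
  have hSleft : ∀ i : ℕ, 1 ≤ i → i ≤ k+1 →
      (a - (i : ZMod n) ≠ a ∧ a - (i : ZMod n) ≠ b ∧ cycDist a (a - (i : ZMod n)) ≤ 2*k) := by
    intro i h1 h2
    refine ⟨?_, ?_, ?_⟩
    · intro h
      have h0 : ((i : ℕ) : ZMod n) = 0 := sub_eq_self.mp h
      rw [cast_eq_zero_iff_small (by omega)] at h0; omega
    · intro h
      rw [hb] at h
      have h0 : ((t + i : ℕ) : ZMod n) = 0 := by push_cast; linear_combination -h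
      rw [cast_eq_zero_iff_small (by omega)] at h0; omega
    · rw [off_gen (2*k) (by omega : i < n) (by ring : a - (a - (i : ZMod n)) = (i : ZMod n))]
      left; omega
  -- right-run membership
  have hSright : ∀ i : ℕ, 1 ≤ i → i ≤ k+1 →
      (b + (i : ZMod n) ≠ a ∧ b + (i : ZMod n) ≠ b ∧ cycDist b (b + (i : ZMod n)) ≤ 2*k) := by
    intro i h1 h2
    refine ⟨?_, ?_, ?_⟩
    · intro h
      rw [hb] at h
      have h0 : ((t + i : ℕ) : ZMod n) = 0 := by push_cast; linear_combination h
      rw [cast_eq_zero_iff_small (by omega)] at h0; omega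
    · intro h
      have h0 : ((i : ℕ) : ZMod n) = 0 := add_eq_left.mp h
      rw [cast_eq_zero_iff_small (by omega)] at h0; omega
    · rw [off0' (2*k) _ (by omega : i < n)]
      left; omega
  -- left run
  have HLrun : ∀ j : ℕ, 1 ≤ j → j ≤ k+1 →
      ∀ u, cycDist u (a - ((k+2 : ℕ) : ZMod n) + (j : ZMod n)) ≤ k ↔
        cycDist (τ u) (τ (a - ((k+2 : ℕ) : ZMod n) + (j : ZMod n))) ≤ k := by
    intro j h1 h2 u
    have hv : a - ((k+2 : ℕ) : ZMod n) + (j : ZMod n) = a - ((k+2-j : ℕ) : ZMod n) := by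
      push_cast [Nat.cast_sub (by omega : j ≤ k+2)]; ring
    rw [hv]
    obtain ⟨hna, hnb, hdist⟩ := hSleft (k+2-j) (by omega) (by omega)
    exact HS _ hna hnb (Or.inl hdist) u
  obtain ⟨ε, hε, Lfml, Lj1, Lj2⟩ := run_lemma hbig hk τ hτ (a - ((k+2 : ℕ) : ZMod n)) HLrun
  have hbase : a - ((k+2 : ℕ) : ZMod n) + 1 = a - ((k+1 : ℕ) : ZMod n) := by push_cast; ring
  have hA : a - ((k+2 : ℕ) : ZMod n) + ((k+2 : ℕ) : ZMod n) = a := by ring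
  have hA1 : a - ((k+2 : ℕ) : ZMod n) + ((k+3 : ℕ) : ZMod n) = a + 1 := by push_cast; ring
  have hAm1 : a - ((k+2 : ℕ) : ZMod n) + ((k+1 : ℕ) : ZMod n) = a - 1 := by push_cast; ring
  rw [hA, hbase] at Lj1
  rw [hA1, hbase] at Lj2
  have hpam1 := Lfml (k+1) (by omega) le_rfl
  rw [hAm1, hbase, (by omega : k + 1 - 1 = k)] at hpam1
  -- Lj1 : τ a = τ (a - ↑(k+1)) + ↑(k+1) * ε
  -- Lj2 : τ (a+1) = τ (a - ↑(k+1)) + ↑(k+2) * ε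
  -- hpam1 : τ (a-1) = τ (a - ↑(k+1)) + ↑k * ε
  -- right run
  have HRrun : ∀ j : ℕ, 1 ≤ j → j ≤ k+1 →
      ∀ u, cycDist u (b + ((k+2 : ℕ) : ZMod n) - (j : ZMod n)) ≤ k ↔
        cycDist (τ u) (τ (b + ((k+2 : ℕ) : ZMod n) - (j : ZMod n))) ≤ k := by
    intro j h1 h2 u
    have hv : b + ((k+2 : ℕ) : ZMod n) - (j : ZMod n) = b + ((k+2-j : ℕ) : ZMod n) := by
      push_cast [Nat.cast_sub (by omega : j ≤ k+2)]; ring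
    rw [hv]
    obtain ⟨hna, hnb, hdist⟩ := hSright (k+2-j) (by omega) (by omega)
    exact HS _ hna hnb (Or.inr hdist) u
  obtain ⟨ε', hε', Rfml, Rj1, Rj2⟩ := run_lemma' hbig hk τ hτ (b + ((k+2 : ℕ) : ZMod n)) HRrun
  have hbase' : b + ((k+2 : ℕ) : ZMod n) - 1 = b + ((k+1 : ℕ) : ZMod n) := by push_cast; ring
  have hB : b + ((k+2 : ℕ) : ZMod n) - ((k+2 : ℕ) : ZMod n) = b := by ring
  have hB1 : b + ((k+2 : ℕ) : ZMod n) - ((k+3 : ℕ) : ZMod n) = b - 1 := by push_cast; ring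
  have hBm1 : b + ((k+2 : ℕ) : ZMod n) - ((k+1 : ℕ) : ZMod n) = b + 1 := by push_cast; ring
  rw [hB, hbase'] at Rj1
  rw [hB1, hbase'] at Rj2
  have hqbp1 := Rfml (k+1) (by omega) le_rfl
  rw [hBm1, hbase', (by omega : k + 1 - 1 = k)] at hqbp1
  -- Rj1 : τ b = τ (b + ↑(k+1)) + ↑(k+1) * ε'
  -- Rj2 : τ (b-1) = τ (b + ↑(k+1)) + ↑(k+2) * ε'
  -- hqbp1 : τ (b+1) = τ (b + ↑(k+1)) + ↑k * ε'
  rcases Nat.lt_or_ge t k with htlt | htge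
  · -- case t ≤ k-1 : use v = a - 1
    obtain ⟨hna, hnb, hdist⟩ := hSleft 1 le_rfl (by omega)
    have h1cast : a - ((1:ℕ) : ZMod n) = a - 1 := by norm_num
    rw [h1cast] at hna hnb hdist
    have hdb : cycDist b (a - 1) ≤ k := by
      have hexp : b = (a - 1) + ((t+1 : ℕ) : ZMod n) := by rw [hb]; push_cast; ring
      rw [hexp, off0 k _ (by omega : t+1 < n)]
      left; omega
    have hq_in : cycDist (τ b) (τ (a - 1)) ≤ k :=
      (HS (a-1) hna hnb (Or.inl hdist) b).mp hdb
    have hq_out : ¬ cycDist (τ b) (τ (a - 1) + ε) ≤ k := by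
      have heq : τ (a - 1) + ε = τ a := by
        rw [hpam1, Lj1]; push_cast; ring
      rw [heq]; exact hred'
    have hcol := mem_diff_unique (by omega) (by omega) hε hq_in hq_out
    have hcol2 : τ b = τ (a - ((k+1:ℕ) : ZMod n)) := by
      rw [hcol, hpam1]; ring
    have hbeq := hτ.1 hcol2
    rw [hb] at hbeq
    have h0 : ((t + (k+1) : ℕ) : ZMod n) = 0 := by
      push_cast at hbeq ⊢; linear_combination hbeq
    rw [cast_eq_zero_iff_small (by omega)] at h0; omega
  · -- case t = k
    have ht : t = k := by omega
    -- v = a + 1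
    have hna1 : a + 1 ≠ a := by
      intro h
      have h0 : ((1:ℕ) : ZMod n) = 0 := by push_cast; linear_combination h
      rw [cast_eq_zero_iff_small (by omega)] at h0; omega
    have hnb1 : a + 1 ≠ b := by
      intro h
      rw [hb] at h
      have h0 : ((t - 1 : ℕ) : ZMod n) = 0 := by
        push_cast [Nat.cast_sub (by omega : 1 ≤ t)]; linear_combination -h
      rw [cast_eq_zero_iff_small (by omega)] at h0; omega
    have hdist1 : cycDist a (a + 1) ≤ 2*k := by
      have hexp : a + 1 = a + ((1:ℕ) : ZMod n) := by norm_num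
      rw [hexp, off0' (2*k) _ (by omega : 1 < n)]
      left; omega
    have hdb1 : cycDist b (a + 1) ≤ k := by
      have hexp : b = (a + 1) + ((t-1 : ℕ) : ZMod n) := by
        rw [hb]; push_cast [Nat.cast_sub (by omega : 1 ≤ t)]; ring
      rw [hexp, off0 k _ (by omega : t - 1 < n)]
      left; omega
    have hq_in : cycDist (τ b) (τ (a + 1)) ≤ k :=
      (HS (a+1) hna1 hnb1 (Or.inl hdist1) b).mp hdb1
    have hnegε : (-ε = 1 ∨ -ε = -1) := by
      rcases hε with rfl | rfl
      · right; rfl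
      · left; exact neg_neg 1
    have hq_out : ¬ cycDist (τ b) (τ (a + 1) + (-ε)) ≤ k := by
      have heq : τ (a + 1) + (-ε) = τ a := by
        rw [Lj2, Lj1]; push_cast; ring
      rw [heq]; exact hred'
    have hcolB := mem_diff_unique (by omega) (by omega) hnegε hq_in hq_out
    -- hcolB : τ b = τ (a+1) - ↑k * (-ε)
    -- v = b - 1
    have hnb2 : b - 1 ≠ b := by
      intro h
      have h0 : ((1:ℕ) : ZMod n) = 0 := by push_cast; linear_combination -h
      rw [cast_eq_zero_iff_small (by omega)] at h0; omega
    have hna2 : b - 1 ≠ a := by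
      intro h
      rw [hb] at h
      have h0 : ((t - 1 : ℕ) : ZMod n) = 0 := by
        push_cast [Nat.cast_sub (by omega : 1 ≤ t)]; linear_combination h
      rw [cast_eq_zero_iff_small (by omega)] at h0; omega
    have hdist2 : cycDist b (b - 1) ≤ 2*k := by
      rw [off_gen (2*k) (by omega : 1 < n)
        (by push_cast; ring : b - (b - 1) = ((1:ℕ) : ZMod n))]
      left; omega
    have hda : cycDist a (b - 1) ≤ k := by
      have hexp : b - 1 = a + ((t-1 : ℕ) : ZMod n) := by
        rw [hb]; push_cast [Nat.cast_sub (by omega : 1 ≤ t)]; ring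
      rw [hexp, off0' k _ (by omega : t - 1 < n)]
      left; omega
    have hp_in : cycDist (τ a) (τ (b - 1)) ≤ k :=
      (HS (b-1) hna2 hnb2 (Or.inr hdist2) a).mp hda
    have hnegε' : (-ε' = 1 ∨ -ε' = -1) := by
      rcases hε' with rfl | rfl
      · right; rfl
      · left; exact neg_neg 1
    have hp_out : ¬ cycDist (τ a) (τ (b - 1) + (-ε')) ≤ k := by
      have heq : τ (b - 1) + (-ε') = τ b := by
        rw [Rj2, Rj1]; push_cast; ring
      rw [heq]; exact hred
    have hcolA := mem_diff_unique (by omega) (by omega) hnegε' hp_in hp_out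
    -- hcolA : τ a = τ (b-1) - ↑k * (-ε')
    -- derive (k+1)(ε+ε') = 0
    rw [Lj2] at hcolB
    rw [Rj2] at hcolA
    push_cast at hcolB hcolA Lj1 Rj1 Lj2 hqbp1
    have hsum : ((k : ZMod n) + 1) * (ε + ε') = 0 := by
      linear_combination Lj1 - hcolB + Rj1 - hcolA
    have hεε' : ε' = -ε := by
      rcases hε with rfl | rfl <;> rcases hε' with rfl | rfl
      · exfalso
        have h0 : ((2*k+2 : ℕ) : ZMod n) = 0 := by push_cast; linear_combination hsum
        rw [cast_eq_zero_iff_small (by omega)] at h0; omega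
      · rfl
      · exact (neg_neg 1).symm
      · exfalso
        have h0 : ((2*k+2 : ℕ) : ZMod n) = 0 := by push_cast; linear_combination -hsum
        rw [cast_eq_zero_iff_small (by omega)] at h0; omega
    rw [hεε'] at hcolA hqbp1 Rj1
    -- final contradiction via edge (a+1, b+1)
    obtain ⟨hna3, hnb3, hdist3⟩ := hSright 1 le_rfl (by omega)
    have h1cast : b + ((1:ℕ) : ZMod n) = b + 1 := by norm_num
    rw [h1cast] at hna3 hnb3 hdist3
    have hd3 : cycDist (a+1) (b+1) ≤ k := by
      have hexp : b + 1 = (a + 1) + ((t : ℕ) : ZMod n) := by rw [hb]; ring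
      rw [hexp, off0' k _ (by omega : t < n)]
      left; omega
    have hfin : cycDist (τ (a+1)) (τ (b+1)) ≤ k :=
      (HS (b+1) hna3 hnb3 (Or.inr hdist3) (a+1)).mp hd3
    have hrel : τ (b+1) = τ (a+1) + ((k+1 : ℕ) : ZMod n) * ε := by
      push_cast
      linear_combination hqbp1 - Lj2 + Lj1 - hcolA
    rcases hε with rfl | rfl
    · rw [hrel, mul_one, cycDist_comm, off0 k _ (by omega : k + 1 < n)] at hfin
      omega
    · have hrel2 : τ (a+1) = τ (b+1) + ((k+1 : ℕ) : ZMod n) := by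
        rw [hrel]; push_cast; ring
      rw [hrel2, off0 k _ (by omega : k + 1 < n)] at hfin
      omega

end RedNearbyAux

/-- **Lemma 3 (every red edge has a nearby red edge).**
Suppose `k ≥ 2` and `n > 2k`, and let `x` be a `2k`-NN graph. Then for every red edge `e`
of `x` (an edge of `x*` that is not an edge of `x`) there is a different red edge `f`
that is nearby, i.e. some endpoint of `e` and some endpoint of `f` are at cyclic distance
at most `2k`. -/
theorem red_edge_has_nearby_red_edge (n k : ℕ) (hk : 2 ≤ k) (hn : 2 * k < n)
    (x : SimpleGraph (ZMod n)) (hx : x ∈ knnGraphs n k)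
    (e : Sym2 (ZMod n)) (he : e ∈ (xstar n k).edgeSet \ x.edgeSet) :
    ∃ f ∈ (xstar n k).edgeSet \ x.edgeSet, f ≠ e ∧
      ∃ u v : ZMod n, u ∈ e ∧ v ∈ f ∧ cycDist u v ≤ 2 * k := by
  haveI : NeZero n := ⟨by omega⟩
  obtain ⟨σ, rfl⟩ := hx
  set τ : ZMod n → ZMod n := ⇑σ.symm with hτdef
  have hτ : Function.Bijective τ := σ.symm.bijective
  obtain ⟨a₀, b₀, rfl⟩ : ∃ x y, e = s(x, y) := Sym2.exists.mp ⟨e, rfl⟩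
  have hstar_adj : ∀ u v : ZMod n, (xstar n k).Adj u v ↔ u ≠ v ∧ cycDist u v ≤ k := by
    intro u v; exact Iff.rfl
  have hx_adj : ∀ u v : ZMod n,
      (knnGraph n k σ).Adj u v ↔ u ≠ v ∧ cycDist (τ u) (τ v) ≤ k := by
    intro u v; exact Iff.rfl
  obtain ⟨hadj, hnadj⟩ := he
  rw [SimpleGraph.mem_edgeSet, hstar_adj] at hadj
  obtain ⟨hab, hdab⟩ := hadj
  have hred : ¬ cycDist (τ a₀) (τ b₀) ≤ k := by
    intro h
    exact hnadj ((SimpleGraph.mem_edgeSet _).mpr ((hx_adj _ _).mpr ⟨hab, h⟩))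
  by_contra hcon
  push_neg at hcon
  -- the "no nearby red edge" consequence
  have HC : ∀ u v : ZMod n, u ≠ v → cycDist u v ≤ k → v ≠ a₀ → v ≠ b₀ →
      (cycDist a₀ v ≤ 2*k ∨ cycDist b₀ v ≤ 2*k) → cycDist (τ u) (τ v) ≤ k := by
    intro u v huv hd hva hvb hnear
    by_contra hτd
    have hfmem : s(u,v) ∈ (xstar n k).edgeSet \ (knnGraph n k σ).edgeSet := by
      constructor
      · rw [SimpleGraph.mem_edgeSet, hstar_adj]; exact ⟨huv, hd⟩
      · intro hmem
        rw [SimpleGraph.mem_edgeSet, hx_adj] at hmem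
        exact hτd hmem.2
    have hfne : s(u,v) ≠ s(a₀,b₀) := by
      intro heq
      rw [Sym2.eq_iff] at heq
      rcases heq with ⟨rfl, rfl⟩ | ⟨rfl, rfl⟩
      · exact hvb rfl
      · exact hva rfl
    have h2k := hcon (s(u,v)) hfmem hfne
    rcases hnear with h | h
    · have := h2k a₀ v (by simp) (by simp); omega
    · have := h2k b₀ v (by simp) (by simp); omega
  have STAR : ∀ v : ZMod n, v ≠ a₀ → v ≠ b₀ →
      (cycDist a₀ v ≤ 2*k ∨ cycDist b₀ v ≤ 2*k) →
      ∀ u, cycDist u v ≤ k ↔ cycDist (τ u) (τ v) ≤ k := by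
    intro v hva hvb hnear
    have hfwd : ∀ u, cycDist u v ≤ k → cycDist (τ u) (τ v) ≤ k := by
      intro u hd
      by_cases huv : u = v
      · subst huv; rw [cycDist_self]; omega
      · exact HC u v huv hd hva hvb hnear
    exact fun u => ⟨hfwd u, star_back (by omega) τ hτ v hfwd u⟩
  rcases le_or_gt n (4*k+1) with hsmall | hbig
  · -- small case : every vertex is nearby
    have hnear_all : ∀ u v : ZMod n, cycDist u v ≤ 2*k := by
      intro u v
      rw [cycDist_le_iff]
      have := ZMod.val_lt (u - v)
      omega
    set Bτ : Finset (ZMod n) :=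
      Finset.univ.filter (fun u => cycDist (τ u) (τ a₀) ≤ k) with hBτ
    have hBτeq : Bτ = (ballF k (τ a₀)).map σ.toEmbedding := by
      ext w
      simp only [hBτ, Finset.mem_filter, Finset.mem_univ, true_and, Finset.mem_map,
        Equiv.coe_toEmbedding, mem_ballF]
      constructor
      · intro h
        exact ⟨σ.symm w, h, σ.apply_symm_apply w⟩
      · rintro ⟨z, hz, rfl⟩
        rwa [hτdef, σ.symm_apply_apply]
    have hBτcard : Bτ.card = 2*k+1 := by
      rw [hBτeq, Finset.card_map, card_ballF (by omega)]
    have hmem_a : a₀ ∈ Bτ := by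
      simp only [hBτ, Finset.mem_filter, Finset.mem_univ, true_and]
      rw [cycDist_self]; omega
    have hmem_ball_a : a₀ ∈ ballF k a₀ := by rw [mem_ballF, cycDist_self]; omega
    have hmem_ball_b : b₀ ∈ (ballF k a₀).erase a₀ := by
      rw [Finset.mem_erase, mem_ballF, cycDist_comm]
      exact ⟨fun h => hab h.symm, hdab⟩
    have hnotsub : ¬ (Bτ.erase a₀ ⊆ ((ballF k a₀).erase a₀).erase b₀) := by
      intro hsub
      have h1 : (Bτ.erase a₀).card = 2*k := by
        rw [Finset.card_erase_of_mem hmem_a, hBτcard]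
        omega
      have h2 : (((ballF k a₀).erase a₀).erase b₀).card = 2*k - 1 := by
        rw [Finset.card_erase_of_mem hmem_ball_b, Finset.card_erase_of_mem hmem_ball_a,
          card_ballF (by omega)]
        omega
      have := Finset.card_le_card hsub
      omega
    obtain ⟨c, hc1, hc2⟩ := Finset.not_subset.mp hnotsub
    rw [Finset.mem_erase] at hc1
    obtain ⟨hca, hcB⟩ := hc1
    simp only [hBτ, Finset.mem_filter, Finset.mem_univ, true_and] at hcB
    rw [Finset.mem_erase, Finset.mem_erase, mem_ballF] at hc2
    push_neg at hc2
    by_cases hcb : c = b₀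
    · subst hcb
      rw [cycDist_comm] at hcB
      exact hred hcB
    · have hnd := hc2 hcb hca
      have hle : cycDist a₀ c ≤ k := by
        rw [STAR c hca hcb (Or.inl (hnear_all a₀ c)) a₀, cycDist_comm]
        exact hcB
      rw [cycDist_comm] at hle
      omega
  · -- big case : apply main_contra, with orientation choice
    have hv1 : 1 ≤ (b₀ - a₀).val ∨ (b₀ - a₀).val = 0 := by omega
    have hne : (b₀ - a₀).val ≠ 0 := by
      rw [Ne, ZMod.val_eq_zero, sub_eq_zero]
      exact fun h => hab h.symm
    have hne' : (a₀ - b₀).val ≠ 0 := by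
      rw [Ne, ZMod.val_eq_zero, sub_eq_zero]
      exact hab
    have hmin : min (a₀ - b₀).val (b₀ - a₀).val ≤ k := hdab
    rcases le_or_gt (b₀ - a₀).val k with hor | hor
    · exact main_contra hk (by omega) τ hτ a₀ b₀ (by omega) hor hred
        (fun v hva hvb hnear u => STAR v hva hvb hnear u)
    · have htk : (a₀ - b₀).val ≤ k := by omega
      have hred2 : ¬ cycDist (τ b₀) (τ a₀) ≤ k := by
        rw [cycDist_comm]; exact hred
      exact main_contra hk (by omega) τ hτ b₀ a₀ (by omega) htk hred2
        (fun v hvb hva hnear u => STAR v hva hvb (Or.symm hnear) u)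

end
end

section
/- Let n ≥ 2k + 2 and k ≥ 1, fix i ∈ ZMod n, and let σ be the permutation of ZMod n with σ(i) = i + 1, σ(i + 1) = i, and σ(j) = j for all other j. Then the edges of x* that are not edges of x(σ) are exactly the two pairs {i − k, i} and {i + 1, i + k + 1}, and the edges of x(σ) that are not edges of x* are exactly the two pairs {i − k, i + 1} and {i, i + k + 1}; in particular the Hamming distance d(x(σ), x*) equals 4. -/
open MeasureTheory Filter
open scoped ENNReal NNReal

noncomputable section

lemma val_add_rel {n : ℕ} [NeZero n] (x y : ZMod n) :
    (x + y).val = x.val + y.val ∨ (x + y).val + n = x.val + y.val := by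
  have h := ZMod.val_add x y
  have hx := ZMod.val_lt x
  have hy := ZMod.val_lt y
  rcases Nat.lt_or_ge (x.val + y.val) n with h'|h'
  · left; rw [h, Nat.mod_eq_of_lt h']
  · right; rw [h]
    have : x.val + y.val - n < n := by omega
    rw [Nat.mod_eq_sub_mod h', Nat.mod_eq_of_lt this]
    omega

lemma val_sub_rel {n : ℕ} [NeZero n] (x y : ZMod n) :
    (x - y).val + y.val = x.val ∨ (x - y).val + y.val = x.val + n := by
  have h := val_add_rel (x - y) y
  rw [sub_add_cancel] at h
  omega

lemma val_neg_rel {n : ℕ} [NeZero n] (x : ZMod n) :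
    x.val + (-x).val = 0 ∨ x.val + (-x).val = n := by
  have h := val_sub_rel 0 x
  simp only [zero_sub, ZMod.val_zero] at h
  omega

set_option maxHeartbeats 2000000 in
lemma nat_key (n k a b A B c d C D : ℕ) (hk : 1 ≤ k) (hn : 2*k+2 ≤ n)
    (ha : a < n) (hb : b < n) (hc : c < n) (hd : d < n) (hC : C < n) (hD : D < n)
    (hcd : c + d = 0 ∨ c + d = n) (hCD : C + D = 0 ∨ C + D = n)
    (hcab : c + b = a ∨ c + b = a + n)
    (hCAB : C + B = A ∨ C + B = A + n)
    (hA : (a = 0 ∧ A = 1) ∨ (a = 1 ∧ A = 0) ∨ (a ≠ 0 ∧ a ≠ 1 ∧ A = a))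
    (hB : (b = 0 ∧ B = 1) ∨ (b = 1 ∧ B = 0) ∨ (b ≠ 0 ∧ b ≠ 1 ∧ B = b)) :
    (((¬ a = b ∧ (c ≤ k ∨ d ≤ k)) ∧ ¬(¬ a = b ∧ (C ≤ k ∨ D ≤ k))) ↔
      ((a = n-k ∧ b = 0) ∨ (a = 0 ∧ b = n-k)) ∨ ((a = 1 ∧ b = k+1) ∨ (a = k+1 ∧ b = 1)))
    ∧ (((¬ a = b ∧ (C ≤ k ∨ D ≤ k)) ∧ ¬(¬ a = b ∧ (c ≤ k ∨ d ≤ k))) ↔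
      ((a = n-k ∧ b = 1) ∨ (a = 1 ∧ b = n-k)) ∨ ((a = 0 ∧ b = k+1) ∨ (a = k+1 ∧ b = 0))) := by
  rcases hA with ⟨h1,h2⟩|⟨h1,h2⟩|⟨h1,h1',h2⟩ <;> rcases hB with ⟨g1,g2⟩|⟨g1,g2⟩|⟨g1,g1',g2⟩ <;>
    subst h2 <;> subst g2 <;> constructor <;> omega

lemma knn_adj {n k : ℕ} (σ : Equiv.Perm (ZMod n)) (u v : ZMod n) :
    (knnGraph n k σ).Adj u v ↔ ¬ u = v ∧ ((σ.symm u - σ.symm v).val ≤ k ∨ (σ.symm v - σ.symm u).val ≤ k) := by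
  show (¬ u = v ∧ cycDist _ _ ≤ k) ↔ _
  rw [cycDist, min_le_iff]

lemma swap_char {n k : ℕ} [NeZero n] (hk : 1 ≤ k) (hn : 2*k+2 ≤ n) (i u : ZMod n) :
    ((u - i).val = 0 ∧ ((Equiv.swap i (i+1)) u - i).val = 1) ∨
    ((u - i).val = 1 ∧ ((Equiv.swap i (i+1)) u - i).val = 0) ∨
    ((u - i).val ≠ 0 ∧ (u - i).val ≠ 1 ∧ ((Equiv.swap i (i+1)) u - i).val = (u - i).val) := by
  have h1v : (1 : ZMod n).val = 1 := by
    have : ((1:ℕ) : ZMod n).val = 1 := ZMod.val_cast_of_lt (by omega)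
    simpa using this
  by_cases h0 : u = i
  · left
    subst h0
    rw [Equiv.swap_apply_left]
    constructor
    · simp
    · rw [show (u + 1 - u : ZMod n) = 1 by ring, h1v]
  · by_cases h1 : u = i + 1
    · right; left
      subst h1
      rw [Equiv.swap_apply_right]
      constructor
      · rw [show (i + 1 - i : ZMod n) = 1 by ring, h1v]
      · simp
    · right; right
      rw [Equiv.swap_apply_of_ne_of_ne h0 h1]
      refine ⟨?_, ?_, rfl⟩
      · intro h
        exact h0 (by
          have : u - i = 0 := by rwa [← ZMod.val_eq_zero]
          have := sub_eq_zero.mp this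
          exact this)
      · intro h
        apply h1
        have : u - i = (1 : ZMod n) := ZMod.val_injective n (by rw [h, h1v])
        have := sub_eq_iff_eq_add.mp this
        rw [this, add_comm]

lemma both_iffs {n k : ℕ} [NeZero n] (hk : 1 ≤ k) (hn : 2*k+2 ≤ n) (i u v : ZMod n) :
    (((xstar n k).Adj u v ∧ ¬ (knnGraph n k (Equiv.swap i (i+1))).Adj u v) ↔
       ((u = i - (k : ZMod n) ∧ v = i) ∨ (u = i ∧ v = i - (k : ZMod n))) ∨
       ((u = i + 1 ∧ v = i + (k : ZMod n) + 1) ∨ (u = i + (k : ZMod n) + 1 ∧ v = i + 1)))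
  ∧ (((knnGraph n k (Equiv.swap i (i+1))).Adj u v ∧ ¬ (xstar n k).Adj u v) ↔
       ((u = i - (k : ZMod n) ∧ v = i + 1) ∨ (u = i + 1 ∧ v = i - (k : ZMod n))) ∨
       ((u = i ∧ v = i + (k : ZMod n) + 1) ∨ (u = i + (k : ZMod n) + 1 ∧ v = i))) := by
  have hn0 : (4:ℕ) ≤ n := by omega
  have hkn : (k : ZMod n).val = k := ZMod.val_cast_of_lt (by omega)
  have h1v : (1 : ZMod n).val = 1 := by
    have : ((1:ℕ) : ZMod n).val = 1 := ZMod.val_cast_of_lt (by omega)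
    simpa using this
  have hk1 : ((k : ZMod n) + 1).val = k + 1 := by
    have : ((k+1:ℕ) : ZMod n).val = k+1 := ZMod.val_cast_of_lt (by omega)
    push_cast at this
    exact this
  have hnk : (-(k : ZMod n)).val = n - k := by
    have h := val_neg_rel (k : ZMod n)
    rw [hkn] at h
    omega
  have veq : ∀ x y : ZMod n, x = y ↔ (x - i).val = (y - i).val := by
    intro x y
    constructor
    · rintro rfl; rfl
    · intro h
      have h2 : x - i = y - i := ZMod.val_injective n h
      have h3 : x - i + i = y - i + i := by rw [h2]
      simpa using h3
  set u' := Equiv.swap i (i+1) u with hu'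
  set v' := Equiv.swap i (i+1) v with hv'
  simp only [xstar, knn_adj, Equiv.symm_swap, Equiv.refl_symm, Equiv.refl_apply, ← hu', ← hv']
  simp only [veq u v, veq u (i - (k:ZMod n)), veq v (i - (k:ZMod n)), veq u i, veq v i,
    veq u (i+1), veq v (i+1), veq u (i + (k:ZMod n) + 1), veq v (i + (k:ZMod n) + 1)]
  rw [show (i - (k:ZMod n) - i) = -(k:ZMod n) by ring, show (i + 1 - i : ZMod n) = 1 by ring,
    show (i + (k:ZMod n) + 1 - i) = (k:ZMod n) + 1 by ring, show (i - i : ZMod n) = 0 by ring,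
    hnk, h1v, hk1, ZMod.val_zero]
  have hA := swap_char (k := k) hk hn i u
  have hB := swap_char (k := k) hk hn i v
  rw [← hu'] at hA
  rw [← hv'] at hB
  have hcab := val_sub_rel (u - i) (v - i)
  rw [show (u - i - (v - i)) = u - v by ring] at hcab
  have hCAB := val_sub_rel (u' - i) (v' - i)
  rw [show (u' - i - (v' - i)) = u' - v' by ring] at hCAB
  have hcd := val_neg_rel (u - v)
  rw [neg_sub] at hcd
  have hCD := val_neg_rel (u' - v')
  rw [neg_sub] at hCD
  exact nat_key n k (u-i).val (v-i).val (u'-i).val (v'-i).val (u-v).val (v-u).val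
    (u'-v').val (v'-u').val hk hn (ZMod.val_lt _) (ZMod.val_lt _) (ZMod.val_lt _)
    (ZMod.val_lt _) (ZMod.val_lt _) (ZMod.val_lt _) hcd hCD hcab hCAB hA hB

/-- **The difference graph of an adjacent transposition (Section 2.2).**
For `n ≥ 2k+2`, swapping the adjacent vertices `i` and `i+1` on the hidden Hamiltonian
cycle produces a `2k`-NN graph whose red edges (edges of `x*` lost) are exactly
`{i-k, i}` and `{i+1, i+k+1}`, whose blue edges (new edges) are exactly `{i-k, i+1}` and
`{i, i+k+1}`; in particular the Hamming distance to `x*` is `4`. -/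
theorem swap_difference_graph (n k : ℕ) (hk : 1 ≤ k) (hn : 2 * k + 2 ≤ n) (i : ZMod n) :
    (xstar n k).edgeSet \ (knnGraph n k (Equiv.swap i (i + 1))).edgeSet
        = {s(i - (k : ZMod n), i), s(i + 1, i + (k : ZMod n) + 1)} ∧
    (knnGraph n k (Equiv.swap i (i + 1))).edgeSet \ (xstar n k).edgeSet
        = {s(i - (k : ZMod n), i + 1), s(i, i + (k : ZMod n) + 1)} ∧
    gdist (knnGraph n k (Equiv.swap i (i + 1))) (xstar n k) = 4 := by
  haveI : NeZero n := ⟨by omega⟩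
  have hred : (xstar n k).edgeSet \ (knnGraph n k (Equiv.swap i (i + 1))).edgeSet
      = {s(i - (k : ZMod n), i), s(i + 1, i + (k : ZMod n) + 1)} := by
    ext e
    induction e using Sym2.ind with
    | _ u v =>
      simp only [Set.mem_diff, SimpleGraph.mem_edgeSet, Set.mem_insert_iff,
        Set.mem_singleton_iff, Sym2.eq_iff]
      exact (both_iffs hk hn i u v).1
  have hblue : (knnGraph n k (Equiv.swap i (i + 1))).edgeSet \ (xstar n k).edgeSet
      = {s(i - (k : ZMod n), i + 1), s(i, i + (k : ZMod n) + 1)} := by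
    ext e
    induction e using Sym2.ind with
    | _ u v =>
      simp only [Set.mem_diff, SimpleGraph.mem_edgeSet, Set.mem_insert_iff,
        Set.mem_singleton_iff, Sym2.eq_iff]
      exact (both_iffs hk hn i u v).2
  refine ⟨hred, hblue, ?_⟩
  -- distinctness of the four vertices
  have hkn : (k : ZMod n).val = k := ZMod.val_cast_of_lt (by omega)
  have h1v : (1 : ZMod n).val = 1 := by
    have : ((1:ℕ) : ZMod n).val = 1 := ZMod.val_cast_of_lt (by omega)
    simpa using this
  have hk1 : ((k : ZMod n) + 1).val = k + 1 := by
    have : ((k+1:ℕ) : ZMod n).val = k+1 := ZMod.val_cast_of_lt (by omega)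
    push_cast at this
    exact this
  have hnk : (-(k : ZMod n)).val = n - k := by
    have h := val_neg_rel (k : ZMod n)
    rw [hkn] at h
    omega
  have key : ∀ x y : ZMod n, (x - i).val ≠ (y - i).val → x ≠ y := by
    intro x y h hxy
    exact h (by rw [hxy])
  have e1 : (i - (k:ZMod n) - i) = -(k:ZMod n) := by ring
  have e2 : (i + 1 - i : ZMod n) = 1 := by ring
  have e3 : (i + (k:ZMod n) + 1 - i) = (k:ZMod n) + 1 := by ring
  have e4 : (i - i : ZMod n) = 0 := by ring
  have d12 : i - (k:ZMod n) ≠ i := key _ _ (by rw [e1, e4, hnk, ZMod.val_zero]; omega)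
  have d13 : i - (k:ZMod n) ≠ i + 1 := key _ _ (by rw [e1, e2, hnk, h1v]; omega)
  have d14 : i - (k:ZMod n) ≠ i + (k:ZMod n) + 1 := key _ _ (by rw [e1, e3, hnk, hk1]; omega)
  have d23 : i ≠ i + 1 := key _ _ (by rw [e2, e4, h1v, ZMod.val_zero]; omega)
  have d24 : i ≠ i + (k:ZMod n) + 1 := key _ _ (by rw [e3, e4, hk1, ZMod.val_zero]; omega)
  have d34 : (i + 1 : ZMod n) ≠ i + (k:ZMod n) + 1 := key _ _ (by rw [e2, e3, h1v, hk1]; omega)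
  rw [gdist, Set.symmDiff_def, hblue, hred, Set.insert_union, Set.singleton_union]
  rw [Set.ncard_insert_of_notMem, Set.ncard_insert_of_notMem, Set.ncard_insert_of_notMem,
    Set.ncard_singleton]
  · simp only [Set.mem_singleton_iff, Sym2.eq_iff]
    tauto
  · simp only [Set.mem_insert_iff, Set.mem_singleton_iff, Sym2.eq_iff]
    push_neg
    constructor <;> [skip; tauto] <;> tauto
  · simp only [Set.mem_insert_iff, Set.mem_singleton_iff, Sym2.eq_iff]
    push_neg
    refine ⟨?_, ?_, ?_⟩ <;> tauto

end
end

section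
/- Let n ≥ 4k + 4 and k ≥ 1. For an integer i with k + 1 ≤ i ≤ n − k − 1, let S_i denote the four-element set of unordered pairs { {i − k, i}, {i + 1, i + k + 1}, {i − k, i + 1}, {i, i + k + 1} } of elements of ZMod n (the edge set of the difference graph of the 2k-NN graph obtained from the identity by swapping i and i + 1). Then for integers i, j with k + 1 ≤ i < j ≤ n − k − 1, the sets S_i and S_j intersect if and only if j − i ∈ {k, k + 1}. -/
open MeasureTheory Filter
open scoped ENNReal NNReal

noncomputable section

/-- The edge set of the difference graph of the `2k`-NN graph obtained from the identity
by swapping `i` and `i+1`: the four pairs `{i-k,i}, {i+1,i+k+1}, {i-k,i+1}, {i,i+k+1}`. -/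
def swapDiffEdges (n k i : ℕ) : Set (Sym2 (ZMod n)) :=
  {s((i : ZMod n) - (k : ZMod n), (i : ZMod n)),
   s((i : ZMod n) + 1, (i : ZMod n) + (k : ZMod n) + 1),
   s((i : ZMod n) - (k : ZMod n), (i : ZMod n) + 1),
   s((i : ZMod n), (i : ZMod n) + (k : ZMod n) + 1)}


lemma natCast_inj_of_bounds {n a b : ℕ} (h : (a : ZMod n) = (b : ZMod n))
    (ha1 : 1 ≤ a) (ha2 : a ≤ n) (hb1 : 1 ≤ b) (hb2 : b ≤ n) : a = b := by
  have hm := (ZMod.natCast_eq_natCast_iff a b n).mp h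
  obtain ⟨c, hc⟩ := hm.dvd
  have hA : (1 : ℤ) ≤ a := by exact_mod_cast ha1
  have hA2 : (a : ℤ) ≤ n := by exact_mod_cast ha2
  have hB : (1 : ℤ) ≤ b := by exact_mod_cast hb1
  have hB2 : (b : ℤ) ≤ n := by exact_mod_cast hb2
  have hc0 : c = 0 := by
    rcases lt_trichotomy c 0 with h0 | h0 | h0
    · have : (n : ℤ) * c ≤ (n : ℤ) * (-1) :=
        mul_le_mul_of_nonneg_left (by omega) (by linarith)
      linarith
    · exact h0
    · have : (n : ℤ) * 1 ≤ (n : ℤ) * c :=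
        mul_le_mul_of_nonneg_left (by omega) (by linarith)
      linarith
  rw [hc0, mul_zero] at hc
  exact_mod_cast (by linarith : (a : ℤ) = b)

lemma sym2_natCast_eq {n a b c d : ℕ}
    (h : s((a : ZMod n), (b : ZMod n)) = s((c : ZMod n), (d : ZMod n)))
    (ha1 : 1 ≤ a) (ha2 : a ≤ n) (hb1 : 1 ≤ b) (hb2 : b ≤ n)
    (hc1 : 1 ≤ c) (hc2 : c ≤ n) (hd1 : 1 ≤ d) (hd2 : d ≤ n) :
    (a = c ∧ b = d) ∨ (a = d ∧ b = c) := by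
  rw [Sym2.eq_iff] at h
  rcases h with ⟨h1, h2⟩ | ⟨h1, h2⟩
  · exact Or.inl ⟨natCast_inj_of_bounds h1 ha1 ha2 hc1 hc2,
      natCast_inj_of_bounds h2 hb1 hb2 hd1 hd2⟩
  · exact Or.inr ⟨natCast_inj_of_bounds h1 ha1 ha2 hd1 hd2,
      natCast_inj_of_bounds h2 hb1 hb2 hc1 hc2⟩

lemma swapDiffEdges_eq (n k i : ℕ) (h : k ≤ i) :
    swapDiffEdges n k i =
      {s(((i - k : ℕ) : ZMod n), ((i : ℕ) : ZMod n)),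
       s(((i + 1 : ℕ) : ZMod n), ((i + k + 1 : ℕ) : ZMod n)),
       s(((i - k : ℕ) : ZMod n), ((i + 1 : ℕ) : ZMod n)),
       s(((i : ℕ) : ZMod n), ((i + k + 1 : ℕ) : ZMod n))} := by
  unfold swapDiffEdges
  push_cast [Nat.cast_sub h]
  rfl

/-- **Intersection pattern of the difference graphs of adjacent transpositions
(Section 2.2).** For `n ≥ 4k+4` and `k+1 ≤ i < j ≤ n-k-1`, the edge sets `S_i` and `S_j`
intersect if and only if `j - i ∈ {k, k+1}`. -/
theorem swapDiffEdges_intersect_iff (n k : ℕ) (hk : 1 ≤ k) (hn : 4 * k + 4 ≤ n)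
    (i j : ℕ) (hi : k + 1 ≤ i) (hij : i < j) (hj : j ≤ n - k - 1) :
    (swapDiffEdges n k i ∩ swapDiffEdges n k j).Nonempty ↔ j - i = k ∨ j - i = k + 1 := by
  rw [swapDiffEdges_eq n k i (by omega), swapDiffEdges_eq n k j (by omega)]
  constructor
  · rintro ⟨s, hs1, hs2⟩
    simp only [Set.mem_insert_iff, Set.mem_singleton_iff] at hs1 hs2
    rcases hs1 with rfl | rfl | rfl | rfl <;> rcases hs2 with h | h | h | h <;>
      · have := sym2_natCast_eq h (by omega) (by omega) (by omega) (by omega)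
          (by omega) (by omega) (by omega) (by omega)
        omega
  · rintro (h | h)
    · have hji : j = i + k := by omega
      subst hji
      refine ⟨s(((i : ℕ) : ZMod n), ((i + k + 1 : ℕ) : ZMod n)), ?_, ?_⟩
      · simp only [Set.mem_insert_iff, Set.mem_singleton_iff]
        right; right; right; trivial
      · have h1 : i + k - k = i := by omega
        rw [h1]
        simp only [Set.mem_insert_iff, Set.mem_singleton_iff]
        right; right; left
        norm_num
    · have hji : j = i + k + 1 := by omega
      subst hji
      refine ⟨s(((i + 1 : ℕ) : ZMod n), ((i + k + 1 : ℕ) : ZMod n)), ?_, ?_⟩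
      · simp only [Set.mem_insert_iff, Set.mem_singleton_iff]
        right; left; trivial
      · have h1 : i + k + 1 - k = i + 1 := by omega
        rw [h1]
        simp only [Set.mem_insert_iff, Set.mem_singleton_iff]
        left; trivial


end
end

section
/- Let P and Q be mutually absolutely continuous Borel probability measures on ℝ and let α = −2 log ∫ √(dP/dQ) dQ. Let Δ ≥ 1 and let X_1, …, X_Δ, Y_1, …, Y_Δ be mutually independent real random variables such that each X_i has the law of log(dP/dQ) under P and each Y_i has the law of log(dP/dQ) under Q. Then P( Σ_{i=1}^Δ Y_i − Σ_{i=1}^Δ X_i ≥ 0 ) ≤ exp(−α Δ). -/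
open MeasureTheory Filter
open scoped ENNReal NNReal

noncomputable section

section ChernoffAux
open ProbabilityTheory

/-- a.e.-equal families are simultaneously independent. -/
lemma iIndepFun_ae_eq' {ι Ω : Type*} [Countable ι] [MeasurableSpace Ω] {μ : Measure Ω}
    {β : ι → Type*} [mβ : ∀ i, MeasurableSpace (β i)] {f g : ∀ i, Ω → β i}
    (hf : iIndepFun f μ) (h : ∀ i, f i =ᵐ[μ] g i) : iIndepFun g μ := by
  rw [iIndepFun_iff_measure_inter_preimage_eq_mul] at hf ⊢
  intro S sets hsets
  have hae : ∀ᵐ ω ∂μ, ∀ i, f i ω = g i ω := ae_all_iff.mpr h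
  have h1 : μ (⋂ i ∈ S, g i ⁻¹' sets i) = μ (⋂ i ∈ S, f i ⁻¹' sets i) := by
    refine measure_congr ?_
    rw [Filter.eventuallyEq_set]
    filter_upwards [hae] with ω hω
    simp only [Set.mem_iInter, Set.mem_preimage]
    exact ⟨fun H i hi => (hω i) ▸ H i hi, fun H i hi => (hω i).symm ▸ H i hi⟩
  have h2 : ∀ i ∈ S, μ (g i ⁻¹' sets i) = μ (f i ⁻¹' sets i) := by
    intro i _
    refine measure_congr ?_
    rw [Filter.eventuallyEq_set]
    filter_upwards [h i] with ω hω
    simp [Set.mem_preimage, hω]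
  rw [h1, hf S hsets]
  exact (Finset.prod_congr rfl h2).symm


/-- a.e. `Q`, `exp(½ llr) = √(dP/dQ)`. -/
lemma exp_half_llr_ae {P Q : Measure ℝ} [IsProbabilityMeasure P] [IsProbabilityMeasure Q] (hQP : Q ≪ P) :
    (fun t => Real.exp ((1/2) * llr P Q t)) =ᵐ[Q]
      fun t => Real.sqrt ((P.rnDeriv Q) t).toReal := by
  filter_upwards [Measure.rnDeriv_pos' hQP, Measure.rnDeriv_lt_top P Q] with t hpos hlt
  have h0 : 0 < ((P.rnDeriv Q) t).toReal := ENNReal.toReal_pos hpos.ne' hlt.ne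
  rw [llr, Real.sqrt_eq_rpow, Real.rpow_def_of_pos h0, mul_comm]

lemma integrable_sqrt_rnDeriv {P Q : Measure ℝ} [IsProbabilityMeasure P] [IsProbabilityMeasure Q] : Integrable (fun t => Real.sqrt ((P.rnDeriv Q) t).toReal) Q := by
  have hint : Integrable (fun t => ((P.rnDeriv Q) t).toReal) Q :=
    Measure.integrable_toReal_rnDeriv
  refine ((integrable_const (1:ℝ)).add hint).mono ?_ ?_
  · exact ((Measure.measurable_rnDeriv P Q).ennreal_toReal.sqrt).aestronglyMeasurable
  · refine Filter.Eventually.of_forall fun t => ?_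
    have h0 : (0:ℝ) ≤ ((P.rnDeriv Q) t).toReal := ENNReal.toReal_nonneg
    have hs := Real.sqrt_nonneg ((P.rnDeriv Q) t).toReal
    have hsq := Real.sq_sqrt h0
    simp only [Pi.add_apply, Real.norm_eq_abs]
    rw [abs_of_nonneg hs, abs_of_nonneg (by positivity)]
    nlinarith [sq_nonneg (Real.sqrt ((P.rnDeriv Q) t).toReal - 1)]

lemma integrable_exp_half_llr {P Q : Measure ℝ} [IsProbabilityMeasure P] [IsProbabilityMeasure Q] (hQP : Q ≪ P) :
    Integrable (fun t => Real.exp ((1/2) * llr P Q t)) Q :=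
  integrable_sqrt_rnDeriv.congr (exp_half_llr_ae hQP).symm

lemma integral_exp_half_llr {P Q : Measure ℝ} [IsProbabilityMeasure P] [IsProbabilityMeasure Q] (hQP : Q ≪ P) :
    ∫ t, Real.exp ((1/2) * llr P Q t) ∂Q
      = ∫ t, Real.sqrt ((P.rnDeriv Q) t).toReal ∂Q :=
  integral_congr_ae (exp_half_llr_ae hQP)

/-- a.e. `Q`, `(dP/dQ) · exp(-½ llr) = √(dP/dQ)`. -/
lemma rnDeriv_smul_exp_neg_half_llr_ae {P Q : Measure ℝ} [IsProbabilityMeasure P] [IsProbabilityMeasure Q] (hQP : Q ≪ P) :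
    (fun t => ((P.rnDeriv Q) t).toReal • Real.exp ((-(1/2)) * llr P Q t)) =ᵐ[Q]
      fun t => Real.sqrt ((P.rnDeriv Q) t).toReal := by
  filter_upwards [Measure.rnDeriv_pos' hQP, Measure.rnDeriv_lt_top P Q] with t hpos hlt
  have h0 : 0 < ((P.rnDeriv Q) t).toReal := ENNReal.toReal_pos hpos.ne' hlt.ne
  simp only [smul_eq_mul, llr]
  rw [Real.sqrt_eq_rpow, Real.rpow_def_of_pos h0]
  nth_rewrite 1 [← Real.exp_log h0]
  rw [← Real.exp_add]
  congr 1
  ring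

lemma integrable_exp_neg_half_llr {P Q : Measure ℝ} [IsProbabilityMeasure P] [IsProbabilityMeasure Q] (hPQ : P ≪ Q) (hQP : Q ≪ P) :
    Integrable (fun t => Real.exp ((-(1/2)) * llr P Q t)) P := by
  rw [← MeasureTheory.integrable_rnDeriv_smul_iff hPQ]
  exact integrable_sqrt_rnDeriv.congr (rnDeriv_smul_exp_neg_half_llr_ae hQP).symm

lemma integral_exp_neg_half_llr {P Q : Measure ℝ} [IsProbabilityMeasure P] [IsProbabilityMeasure Q] (hPQ : P ≪ Q) (hQP : Q ≪ P) :
    ∫ t, Real.exp ((-(1/2)) * llr P Q t) ∂P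
      = ∫ t, Real.sqrt ((P.rnDeriv Q) t).toReal ∂Q := by
  rw [← MeasureTheory.integral_rnDeriv_smul hPQ]
  exact integral_congr_ae (rnDeriv_smul_exp_neg_half_llr_ae hQP)

end ChernoffAux

open ProbabilityTheory in
/-- **Chernoff bound via the order-1/2 Rényi divergence (equation (13)).**
If `X_1, …, X_Δ, Y_1, …, Y_Δ` are mutually independent, the `X_i` distributed as
`log(dP/dQ)` under `P` and the `Y_i` distributed as `log(dP/dQ)` under `Q`, then
`P(Σ Y_i - Σ X_i ≥ 0) ≤ exp(-α Δ)` where `α` is the order-1/2 Rényi divergence. -/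
theorem chernoff_renyi_bound
    (P Q : Measure ℝ) [IsProbabilityMeasure P] [IsProbabilityMeasure Q]
    (hPQ : P ≪ Q) (hQP : Q ≪ P)
    (Δ : ℕ) (hΔ : 1 ≤ Δ)
    {Ω : Type*} [MeasurableSpace Ω] (μ : Measure Ω) [IsProbabilityMeasure μ]
    (X Y : Fin Δ → Ω → ℝ)
    (hindep : iIndepFun (Sum.elim X Y) μ)
    (hX : ∀ i, Measure.map (X i) μ = Measure.map (llr P Q) P)
    (hY : ∀ i, Measure.map (Y i) μ = Measure.map (llr P Q) Q) :
    μ {ω | 0 ≤ (∑ i, Y i ω) - ∑ i, X i ω}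
      ≤ ENNReal.ofReal (Real.exp (-(renyiHalf P Q) * Δ)) := by
  classical
  set β := ∫ t, Real.sqrt ((P.rnDeriv Q) t).toReal ∂Q with hβ
  have hβ0 : (0:ℝ) ≤ β := integral_nonneg fun t => Real.sqrt_nonneg _
  rcases eq_or_lt_of_le hβ0 with hβeq | hβpos
  · have hr : renyiHalf P Q = 0 := by
      rw [renyiHalf, ← hβ, ← hβeq, Real.log_zero, mul_zero]
    rw [hr]
    simp only [neg_zero, zero_mul, Real.exp_zero, ENNReal.ofReal_one]
    exact prob_le_one
  · have hm : Measurable (llr P Q) := measurable_llr P Q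
    haveI : IsProbabilityMeasure (Measure.map (llr P Q) P) :=
      Measure.isProbabilityMeasure_map hm.aemeasurable
    haveI : IsProbabilityMeasure (Measure.map (llr P Q) Q) :=
      Measure.isProbabilityMeasure_map hm.aemeasurable
    have hXae : ∀ i, AEMeasurable (X i) μ := by
      intro i; by_contra h
      have h0 := Measure.map_of_not_aemeasurable h
      rw [hX i] at h0
      exact (IsProbabilityMeasure.ne_zero _) h0
    have hYae : ∀ i, AEMeasurable (Y i) μ := by
      intro i; by_contra h
      have h0 := Measure.map_of_not_aemeasurable h
      rw [hY i] at h0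
      exact (IsProbabilityMeasure.ne_zero _) h0
    set X' : Fin Δ → Ω → ℝ := fun i => (hXae i).mk _ with hX'
    set Y' : Fin Δ → Ω → ℝ := fun i => (hYae i).mk _ with hY'
    have hXeq : ∀ i, X i =ᵐ[μ] X' i := fun i => (hXae i).ae_eq_mk
    have hYeq : ∀ i, Y i =ᵐ[μ] Y' i := fun i => (hYae i).ae_eq_mk
    have hXm : ∀ i, Measurable (X' i) := fun i => (hXae i).measurable_mk
    have hYm : ∀ i, Measurable (Y' i) := fun i => (hYae i).measurable_mk
    have hmapX : ∀ i, Measure.map (X' i) μ = Measure.map (llr P Q) P := fun i => by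
      rw [← Measure.map_congr (hXeq i), hX i]
    have hmapY : ∀ i, Measure.map (Y' i) μ = Measure.map (llr P Q) Q := fun i => by
      rw [← Measure.map_congr (hYeq i), hY i]
    set F : (Fin Δ ⊕ Fin Δ) → Ω → ℝ := Sum.elim (fun j => -(X' j)) Y' with hF
    have hFm : ∀ i, Measurable (F i) := by
      rintro (j | j)
      exacts [(hXm j).neg, hYm j]
    have hindep' : iIndepFun (Sum.elim X' Y') μ := by
      refine iIndepFun_ae_eq' hindep ?_
      rintro (j | j)
      exacts [hXeq j, hYeq j]
    have hindepF : iIndepFun F μ := by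
      have h := hindep'.comp (Sum.elim (fun _ => fun x : ℝ => -x) (fun _ => id))
        (by rintro (j | j); exacts [measurable_neg, measurable_id])
      convert h using 1
      funext i
      cases i <;> rfl
    have hgm : ∀ (c : ℝ) (ν : Measure ℝ),
        AEStronglyMeasurable (fun x : ℝ => Real.exp (c * x)) ν := fun c ν =>
      (Real.continuous_exp.comp (continuous_const.mul continuous_id)).aestronglyMeasurable
    -- integrability of each exponential factor
    have hintF : ∀ i, Integrable (fun ω => Real.exp ((1/2 : ℝ) * F i ω)) μ := by
      rintro (j | j)
      case inl =>
        have h1 : Integrable (fun x : ℝ => Real.exp ((-(1/2) : ℝ) * x))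
            (Measure.map (X' j) μ) := by
          rw [hmapX j, integrable_map_measure (hgm _ _) hm.aemeasurable]
          exact integrable_exp_neg_half_llr hPQ hQP
        have h2 := (integrable_map_measure (hgm (-(1/2)) _) (hXm j).aemeasurable).mp h1
        refine h2.congr (Filter.Eventually.of_forall fun ω => ?_)
        simp only [Function.comp_apply, hF, Sum.elim_inl, Pi.neg_apply]
        ring_nf
      case inr =>
        have h1 : Integrable (fun x : ℝ => Real.exp ((1/2 : ℝ) * x))
            (Measure.map (Y' j) μ) := by
          rw [hmapY j, integrable_map_measure (hgm _ _) hm.aemeasurable]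
          exact integrable_exp_half_llr hQP
        have h2 := (integrable_map_measure (hgm (1/2) _) (hYm j).aemeasurable).mp h1
        exact h2.congr (Filter.Eventually.of_forall fun ω => by
          simp only [Function.comp_apply, hF, Sum.elim_inr])
    -- mgf of each factor equals β
    have hmgfF : ∀ i, mgf (F i) μ (1/2) = β := by
      rintro (j | j)
      case inl =>
        have : F (Sum.inl j) = -(X' j) := rfl
        rw [this, mgf_neg, mgf]
        have e1 := integral_map (μ := μ) (hXm j).aemeasurable
          (f := fun x : ℝ => Real.exp ((-(1/2) : ℝ) * x)) (hgm _ _)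
        rw [← e1, hmapX j]
        rw [integral_map hm.aemeasurable (hgm _ _)]
        exact integral_exp_neg_half_llr hPQ hQP
      case inr =>
        have : F (Sum.inr j) = Y' j := rfl
        rw [this, mgf]
        have e1 := integral_map (μ := μ) (hYm j).aemeasurable
          (f := fun x : ℝ => Real.exp ((1/2 : ℝ) * x)) (hgm _ _)
        rw [← e1, hmapY j]
        rw [integral_map hm.aemeasurable (hgm _ _)]
        exact integral_exp_half_llr hQP
    -- the two events agree a.e.
    have hsets : μ {ω | 0 ≤ (∑ i, Y i ω) - ∑ i, X i ω}
        = μ {ω | (0:ℝ) ≤ (∑ i, F i) ω} := by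
      refine measure_congr ?_
      rw [Filter.eventuallyEq_set]
      have hae : ∀ᵐ ω ∂μ, (∀ i, X i ω = X' i ω) ∧ ∀ i, Y i ω = Y' i ω := by
        refine Filter.Eventually.and (ae_all_iff.mpr ?_) (ae_all_iff.mpr ?_)
        exacts [hXeq, hYeq]
      filter_upwards [hae] with ω hω
      have hsum : (∑ i, F i) ω = (∑ i, Y i ω) - ∑ i, X i ω := by
        simp only [Finset.sum_apply, hF, Fintype.sum_sum_type, Sum.elim_inl, Sum.elim_inr,
          Pi.neg_apply]
        rw [Finset.sum_neg_distrib]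
        have h1 : ∀ j, X' j ω = X j ω := fun j => (hω.1 j).symm
        have h2 : ∀ j, Y' j ω = Y j ω := fun j => (hω.2 j).symm
        simp only [h1, h2]
        ring
      simp only [Set.mem_setOf_eq, hsum]
    -- Chernoff
    have hintsum : Integrable (fun ω => Real.exp ((1/2 : ℝ) * (∑ i, F i) ω)) μ :=
      hindepF.integrable_exp_mul_sum hFm fun i _ => hintF i
    have hcher := measure_ge_le_exp_mul_mgf (μ := μ) (X := ∑ i, F i) 0
      (by norm_num : (0:ℝ) ≤ 1/2) hintsum
    simp only [mul_zero, Real.exp_zero, one_mul] at hcher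
    have hmgf : mgf (∑ i, F i) μ (1/2) = β ^ (Δ + Δ) := by
      rw [hindepF.mgf_sum hFm Finset.univ, Fintype.prod_sum_type]
      rw [Finset.prod_congr rfl fun j _ => hmgfF (Sum.inl j),
        Finset.prod_congr rfl fun j _ => hmgfF (Sum.inr j),
        Finset.prod_const]
      simp [Finset.card_univ, pow_add]
    rw [hmgf] at hcher
    rw [hsets]
    calc μ {ω | (0:ℝ) ≤ (∑ i, F i) ω}
        = ENNReal.ofReal ((μ {ω | (0:ℝ) ≤ (∑ i, F i) ω}).toReal) :=
          (ENNReal.ofReal_toReal (measure_ne_top _ _)).symm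
      _ ≤ ENNReal.ofReal (β ^ (Δ + Δ)) := ENNReal.ofReal_le_ofReal hcher
      _ = ENNReal.ofReal (Real.exp (-(renyiHalf P Q) * Δ)) := by
          congr 1
          rw [renyiHalf, ← hβ]
          have h2 : -(-2 * Real.log β) * (Δ:ℝ) = ((Δ + Δ : ℕ) : ℝ) * Real.log β := by
            push_cast; ring
          rw [h2, Real.exp_nat_mul, Real.exp_log hβpos]


end
end

section
/- Let (k_n) be integers with 1 ≤ k_n < n/2 and let (μ_n) be a positive real sequence with liminf_{n→∞} μ_n²/(2 log n) > 1. Consider the hidden 2k_n-NN graph model on ZMod n in which the weight of each edge of x* has law N(μ_n, 1) and the weight of each non-edge of x* has law N(0, 1), all weights independent. Let (ε_n) satisfy ε_n → 0 and ε_n log n → ∞, and define the thresholding estimator x̂_TH by declaring a pair e an edge if and only if w_e > √((2 + ε_n) log n). Then the expected number of misclassified pairs, E[ #{ pairs e : e is an edge of x̂_TH XOR e is an edge of x* } ], is o(n k_n); that is, thresholding achieves almost exact recovery. -/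
open MeasureTheory Filter
open scoped ENNReal NNReal

noncomputable section

section AuxRecovery
open ProbabilityTheory

lemma gaussPDF_le (m τ : ℝ) (h : m ≤ τ) (x : ℝ) (hx : τ ≤ x) :
    gaussianPDFReal m 1 x ≤ Real.exp (-(τ - m)^2/2) * gaussianPDFReal τ 1 x := by
  unfold gaussianPDFReal
  push_cast
  have key : Real.exp (-(x - m)^2/(2*1)) ≤
      Real.exp (-(x - τ)^2/(2*1)) * Real.exp (-(τ - m)^2/2) := by
    rw [← Real.exp_add, Real.exp_le_exp]
    nlinarith [mul_nonneg (sub_nonneg.2 h) (sub_nonneg.2 hx)]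
  calc (√(2*Real.pi*1))⁻¹ * Real.exp (-(x - m)^2/(2*1))
      ≤ (√(2*Real.pi*1))⁻¹ * (Real.exp (-(x - τ)^2/(2*1)) * Real.exp (-(τ - m)^2/2)) :=
        mul_le_mul_of_nonneg_left key (by positivity)
    _ = Real.exp (-(τ - m)^2/2) * ((√(2*Real.pi*1))⁻¹ * Real.exp (-(x - τ)^2/(2*1))) := by ring

lemma gauss_upper (m τ : ℝ) (h : m ≤ τ) :
    gaussianReal m 1 {x | τ ≤ x} ≤ ENNReal.ofReal (Real.exp (-(τ - m)^2/2)) := by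
  rw [gaussianReal_apply m one_ne_zero]
  calc ∫⁻ x in {x | τ ≤ x}, gaussianPDF m 1 x
      ≤ ∫⁻ x in {x | τ ≤ x}, ENNReal.ofReal (Real.exp (-(τ - m)^2/2)) * gaussianPDF τ 1 x := by
        refine setLIntegral_mono ((measurable_gaussianPDF τ 1).const_mul _) fun x hx => ?_
        rw [gaussianPDF_def, gaussianPDF_def, ← ENNReal.ofReal_mul (by positivity)]
        exact ENNReal.ofReal_le_ofReal (gaussPDF_le m τ h x hx)
    _ = ENNReal.ofReal (Real.exp (-(τ - m)^2/2)) * ∫⁻ x in {x | τ ≤ x}, gaussianPDF τ 1 x := by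
        rw [lintegral_const_mul _ (measurable_gaussianPDF τ 1)]
    _ ≤ ENNReal.ofReal (Real.exp (-(τ - m)^2/2)) * ∫⁻ x, gaussianPDF τ 1 x := by
        gcongr
        exact Measure.restrict_le_self
    _ = ENNReal.ofReal (Real.exp (-(τ - m)^2/2)) := by
        rw [lintegral_gaussianPDF_eq_one τ one_ne_zero, mul_one]

lemma gauss_lower (m τ : ℝ) (h : τ ≤ m) :
    gaussianReal m 1 {x | x ≤ τ} ≤ ENNReal.ofReal (Real.exp (-(m - τ)^2/2)) := by
  have hmap : Measure.map (fun x => -x) (gaussianReal m 1) = gaussianReal (-m) 1 := by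
    have := gaussianReal_map_const_mul (μ := m) (v := 1) (-1)
    simpa using this
  have heq : gaussianReal m 1 {x | x ≤ τ} = gaussianReal (-m) 1 {x | -τ ≤ x} := by
    rw [← hmap, show {x : ℝ | -τ ≤ x} = Set.Ici (-τ) from rfl,
      Measure.map_apply measurable_neg measurableSet_Ici]
    congr 1
    ext x
    simp only [Set.mem_preimage, Set.mem_setOf_eq, Set.mem_Ici, neg_le_neg_iff]
  rw [heq]
  have h2 := gauss_upper (-m) (-τ) (by linarith)
  have : (-τ - -m)^2 = (m - τ)^2 := by ring
  rwa [this] at h2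

-- edge count bound
open Classical in
lemma edge_count (n k : ℕ) [NeZero n] :
    (Finset.univ.filter (· ∈ (xstar n k).edgeSet)).card ≤ n * k := by
  classical
  set g : ZMod n × Fin k → Sym2 (ZMod n) := fun p => s(p.1, p.1 + ((p.2 : ℕ) + 1 : ℕ)) with hg
  have hsub : Finset.univ.filter (· ∈ (xstar n k).edgeSet) ⊆ Finset.image g Finset.univ := by
    intro e he
    rw [Finset.mem_filter] at he
    have he' := he.2
    induction e with
    | _ u v =>
      rw [SimpleGraph.mem_edgeSet] at he'
      obtain ⟨huv, hd⟩ := he'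
      simp only [xstar, knnGraph, Equiv.refl_symm, Equiv.refl_apply, cycDist] at hd ⊢
      have hval : ∀ a b : ZMod n, a ≠ b → 1 ≤ (b - a).val := by
        intro a b hab
        have h0 : b - a ≠ 0 := sub_ne_zero.2 (Ne.symm hab)
        have := (ZMod.val_eq_zero (b - a)).not.2 h0
        omega
      rw [Finset.mem_image]
      rcases le_total (v - u).val (u - v).val with hle | hle
      · have h1 : (v - u).val ≤ k := by omega
        have h0 : 1 ≤ (v - u).val := hval u v huv
        refine ⟨(u, ⟨(v - u).val - 1, by omega⟩), Finset.mem_univ _, ?_⟩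
        simp only [hg]
        congr 1
        have h2 : ((v - u).val - 1 + 1 : ℕ) = (v - u).val := by omega
        rw [h2, ZMod.natCast_val, ZMod.cast_id]
        ring
      · have h1 : (u - v).val ≤ k := by omega
        have h0 : 1 ≤ (u - v).val := hval v u (Ne.symm huv)
        refine ⟨(v, ⟨(u - v).val - 1, by omega⟩), Finset.mem_univ _, ?_⟩
        rw [show s(u,v) = s(v,u) from Sym2.eq_swap]
        simp only [hg]
        congr 1
        have h2 : ((u - v).val - 1 + 1 : ℕ) = (u - v).val := by omega
        rw [h2, ZMod.natCast_val, ZMod.cast_id]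
        ring
  calc (Finset.univ.filter (· ∈ (xstar n k).edgeSet)).card
      ≤ (Finset.image g Finset.univ).card := Finset.card_le_card hsub
    _ ≤ (Finset.univ : Finset (ZMod n × Fin k)).card := Finset.card_image_le
    _ = n * k := by simp [ZMod.card]

open Classical in
lemma main_bound (n k : ℕ) [NeZero n] (hk : 1 ≤ k) (m τ : ℝ) (hτ0 : 0 ≤ τ) (hτm : τ ≤ m) :
    (∫⁻ w, (({e : Sym2 (ZMod n) | ¬ e.IsDiag ∧ Xor' (τ < w e)
          (e ∈ (xstar n k).edgeSet)}).ncard : ℝ≥0∞)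
      ∂(edgeMeasure n (gaussianReal m 1) (gaussianReal 0 1) (xstar n k)))
    ≤ ((n * k : ℕ) : ℝ≥0∞) * ENNReal.ofReal
        (Real.exp (-(m - τ)^2/2) + n * Real.exp (-(τ - 0)^2/2)) := by
  classical
  set E := (xstar n k).edgeSet with hE
  set ν : Sym2 (ZMod n) → Measure ℝ :=
    fun e => if e ∈ E then gaussianReal m 1 else gaussianReal 0 1 with hν
  have hπ : edgeMeasure n (gaussianReal m 1) (gaussianReal 0 1) (xstar n k) = Measure.pi ν := by
    rw [edgeMeasure, dif_neg (NeZero.ne n)]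
  haveI : ∀ e, IsProbabilityMeasure (ν e) := by
    intro e; rw [hν]; dsimp only; split <;> infer_instance
  set π := Measure.pi ν with hπdef
  rw [hπ]
  set S : Sym2 (ZMod n) → Set (Sym2 (ZMod n) → ℝ) :=
    fun e => {w : Sym2 (ZMod n) → ℝ | ¬e.IsDiag ∧ Xor' (τ < w e) (e ∈ E)} with hS
  have hsets : ∀ e : Sym2 (ZMod n),
      S e = if e.IsDiag then ∅ else
          (if e ∈ E then Function.eval e ⁻¹' Set.Iic τ else Function.eval e ⁻¹' Set.Ioi τ) := by
    intro e
    by_cases hd : e.IsDiag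
    · simp [hS, hd]
    · by_cases he : e ∈ E <;> ext w <;> simp [hS, hd, he, Xor', xor_def, not_lt, Function.eval]
  have hmeas : ∀ e : Sym2 (ZMod n), MeasurableSet (S e) := by
    intro e
    rw [hsets e]
    split
    · exact MeasurableSet.empty
    · split
      · exact (measurable_pi_apply e) measurableSet_Iic
      · exact (measurable_pi_apply e) measurableSet_Ioi
  -- rewrite the counting function as a finite sum of indicators
  have hcount : ∀ w : Sym2 (ZMod n) → ℝ,
      (({e : Sym2 (ZMod n) | ¬ e.IsDiag ∧ Xor' (τ < w e) (e ∈ E)}).ncard : ℝ≥0∞)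
        = ∑ e : Sym2 (ZMod n), (S e).indicator (1 : (Sym2 (ZMod n) → ℝ) → ℝ≥0∞) w := by
    intro w
    have h1 : {e : Sym2 (ZMod n) | ¬ e.IsDiag ∧ Xor' (τ < w e) (e ∈ E)} =
        ↑(Finset.univ.filter fun e : Sym2 (ZMod n) => ¬ e.IsDiag ∧ Xor' (τ < w e) (e ∈ E)) := by
      ext e; simp
    rw [h1, Set.ncard_coe_finset, Finset.card_filter]
    push_cast
    apply Finset.sum_congr rfl
    intro e _
    by_cases hcond : (¬e.IsDiag ∧ Xor' (τ < w e) (e ∈ E))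
    · simp [hS, Set.indicator_apply, Set.mem_setOf_eq, hcond]
    · simp [hS, Set.indicator_apply, Set.mem_setOf_eq, hcond]
  simp only [hcount]
  rw [lintegral_finset_sum _ fun e _ => (measurable_one.indicator (hmeas e))]
  -- evaluate each summand
  have hval : ∀ e : Sym2 (ZMod n),
      (∫⁻ w, (S e).indicator (1 : (Sym2 (ZMod n) → ℝ) → ℝ≥0∞) w ∂π)
        ≤ if e ∈ E then ENNReal.ofReal (Real.exp (-(m - τ)^2/2))
          else ENNReal.ofReal (Real.exp (-(τ - 0)^2/2)) := by
    intro e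
    rw [lintegral_indicator_one (hmeas e), hsets e]
    split
    · simp
    · split
      next he =>
        have hpre : π (Function.eval e ⁻¹' Set.Iic τ) = ν e (Set.Iic τ) := by
          rw [hπdef, Set.eval_preimage, Measure.pi_pi,
            Finset.prod_eq_single e (fun j _ hj => by simp [Function.update_of_ne hj])
              (fun h => absurd (Finset.mem_univ e) h)]
          simp
        rw [hpre, hν]
        simp only [if_pos he]
        exact gauss_lower m τ hτm
      next he =>
        have hpre : π (Function.eval e ⁻¹' Set.Ioi τ) = ν e (Set.Ioi τ) := by
          rw [hπdef, Set.eval_preimage, Measure.pi_pi,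
            Finset.prod_eq_single e (fun j _ hj => by simp [Function.update_of_ne hj])
              (fun h => absurd (Finset.mem_univ e) h)]
          simp
        rw [hpre, hν]
        simp only [if_neg he]
        calc gaussianReal 0 1 (Set.Ioi τ) ≤ gaussianReal 0 1 {x | τ ≤ x} :=
              measure_mono (fun x (hx : τ < x) => (le_of_lt hx : τ ≤ x))
          _ ≤ ENNReal.ofReal (Real.exp (-(τ - 0)^2/2)) := gauss_upper 0 τ hτ0
  calc (∑ e : Sym2 (ZMod n), ∫⁻ w, (S e).indicator (1 : (Sym2 (ZMod n) → ℝ) → ℝ≥0∞) w ∂π)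
      ≤ ∑ e : Sym2 (ZMod n), (if e ∈ E then ENNReal.ofReal (Real.exp (-(m - τ)^2/2))
          else ENNReal.ofReal (Real.exp (-(τ - 0)^2/2))) := Finset.sum_le_sum fun e _ => hval e
    _ = (Finset.univ.filter (· ∈ E)).card * ENNReal.ofReal (Real.exp (-(m - τ)^2/2))
        + (Finset.univ.filter (fun e => ¬ e ∈ E)).card
            * ENNReal.ofReal (Real.exp (-(τ - 0)^2/2)) := by
        rw [Finset.sum_ite, Finset.sum_const, Finset.sum_const, nsmul_eq_mul, nsmul_eq_mul]
    _ ≤ ((n * k : ℕ) : ℝ≥0∞) * ENNReal.ofReal (Real.exp (-(m - τ)^2/2))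
        + ((n * k * n : ℕ) : ℝ≥0∞) * ENNReal.ofReal (Real.exp (-(τ - 0)^2/2)) := by
        gcongr
        · exact_mod_cast edge_count n k
        · have h1 : (Finset.univ.filter (fun e => ¬ e ∈ E)).card
              ≤ Fintype.card (Sym2 (ZMod n)) :=
            le_trans (Finset.card_filter_le _ _) (by simp)
          have h2 : Fintype.card (Sym2 (ZMod n)) ≤ n * k * n := by
            rw [Sym2.card, ZMod.card, Nat.choose_two_right]
            have hn : 1 ≤ n := Nat.one_le_iff_ne_zero.2 (NeZero.ne n)
            refine Nat.div_le_of_le_mul ?_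
            have h3 : n + 1 ≤ 2 * n := by omega
            calc (n + 1) * n ≤ (2 * n) * n := Nat.mul_le_mul_right n h3
              _ = 2 * (n * 1 * n) := by ring
              _ ≤ 2 * (n * k * n) :=
                  Nat.mul_le_mul_left 2 (Nat.mul_le_mul (Nat.mul_le_mul_left n hk) (le_refl n))
          exact_mod_cast le_trans h1 h2
    _ = ((n * k : ℕ) : ℝ≥0∞) * ENNReal.ofReal
        (Real.exp (-(m - τ)^2/2) + n * Real.exp (-(τ - 0)^2/2)) := by
        rw [ENNReal.ofReal_add (by positivity) (by positivity),
          ENNReal.ofReal_mul (by positivity), mul_add]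
        congr 1
        push_cast
        rw [ENNReal.ofReal_natCast]
        ring

end AuxRecovery

open ProbabilityTheory in
/-- **Almost exact recovery via simple thresholding in the Gaussian model (Section 4.1).**
With weights `N(μ_n,1)` on the hidden `2k_n`-NN graph and `N(0,1)` elsewhere, if
`liminf μ_n²/(2 log n) > 1`, `ε_n → 0` and `ε_n log n → ∞`, then the estimator declaring
`e` an edge iff `w_e > √((2+ε_n) log n)` misclassifies an expected `o(n k_n)` pairs of
distinct vertices. -/
theorem thresholding_almost_exact_recovery
    (k : ℕ → ℕ) (μ : ℕ → ℝ) (hμ : ∀ n, 0 < μ n)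
    (hk : ∀ᶠ n in atTop, 1 ≤ k n ∧ 2 * k n < n)
    (hliminf : ∃ c : ℝ, 1 < c ∧ ∀ᶠ n in atTop, c ≤ (μ n) ^ 2 / (2 * Real.log n))
    (ε : ℕ → ℝ) (hε0 : Tendsto ε atTop (nhds 0))
    (hεlog : Tendsto (fun n => ε n * Real.log n) atTop atTop) :
    Tendsto (fun n =>
        (∫⁻ w, (({e : Sym2 (ZMod n) | ¬ e.IsDiag ∧
              Xor' (Real.sqrt ((2 + ε n) * Real.log n) < w e)
                (e ∈ (xstar n (k n)).edgeSet)}).ncard : ℝ≥0∞)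
          ∂(edgeMeasure n (gaussianReal (μ n) 1) (gaussianReal 0 1) (xstar n (k n))))
        / ((n * k n : ℕ) : ℝ≥0∞))
      atTop (nhds 0) := by
  obtain ⟨c, hc1, hc2⟩ := hliminf
  have hδpos : 0 < Real.sqrt (2*c) - Real.sqrt (1+c) := by
    rw [sub_pos]
    exact Real.sqrt_lt_sqrt (by positivity) (by linarith)
  set δ : ℝ := Real.sqrt (2*c) - Real.sqrt (1+c) with hδ
  set g : ℕ → ℝ := fun n =>
    Real.exp (-(δ^2 * Real.log n)/2) + Real.exp (-(ε n * Real.log n)/2) with hgdef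
  have hlogtop : Tendsto (fun n : ℕ => Real.log n) atTop atTop :=
    Real.tendsto_log_atTop.comp tendsto_natCast_atTop_atTop
  have hg0 : Tendsto g atTop (nhds 0) := by
    have h1 : Tendsto (fun n : ℕ => Real.exp (-(δ^2 * Real.log n)/2)) atTop (nhds 0) := by
      apply Real.tendsto_exp_atBot.comp
      have hA : Tendsto (fun n : ℕ => δ^2 * Real.log n) atTop atTop :=
        hlogtop.const_mul_atTop (by positivity)
      have := hA.atTop_mul_const_of_neg (r := -(1/2 : ℝ)) (by norm_num)
      convert this using 2 with n
      ring
    have h2 : Tendsto (fun n : ℕ => Real.exp (-(ε n * Real.log n)/2)) atTop (nhds 0) := by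
      apply Real.tendsto_exp_atBot.comp
      have := hεlog.atTop_mul_const_of_neg (r := -(1/2 : ℝ)) (by norm_num)
      convert this using 2 with n
      ring
    simpa using h1.add h2
  have hgENN : Tendsto (fun n => ENNReal.ofReal (g n)) atTop (nhds 0) := by
    have := (ENNReal.continuous_ofReal.tendsto 0).comp hg0
    simpa [Function.comp_def] using this
  refine tendsto_of_tendsto_of_tendsto_of_le_of_le' tendsto_const_nhds hgENN
    (Eventually.of_forall fun n => zero_le) ?_
  have hεsmall : ∀ᶠ n in atTop, ε n < c - 1 :=
    hε0.eventually_lt_const (by linarith)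
  have hεlogpos : ∀ᶠ n in atTop, 0 ≤ ε n * Real.log n := hεlog.eventually_ge_atTop 0
  have hlog1 : ∀ᶠ n : ℕ in atTop, 1 ≤ Real.log n := hlogtop.eventually_ge_atTop 1
  filter_upwards [hk, hc2, hεsmall, hεlogpos, hlog1, eventually_ge_atTop 1]
    with n hkn hcn hεn hεln hlogn hn1
  haveI : NeZero n := ⟨by omega⟩
  set m : ℝ := μ n with hm
  set τ : ℝ := Real.sqrt ((2 + ε n) * Real.log n) with hτ
  have hlogpos : 0 < Real.log n := by linarith
  have hε0n : 0 ≤ ε n := by nlinarith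
  have hτ0 : 0 ≤ τ := Real.sqrt_nonneg _
  have hτsq : τ^2 = (2 + ε n) * Real.log n := Real.sq_sqrt (by positivity)
  have hmpos : 0 < m := hμ n
  have hm2 : 2 * c * Real.log n ≤ m^2 := by
    rw [le_div_iff₀ (by positivity)] at hcn
    nlinarith
  have hmge : Real.sqrt (2 * c * Real.log n) ≤ m := by
    calc Real.sqrt (2 * c * Real.log n) ≤ Real.sqrt (m^2) := Real.sqrt_le_sqrt hm2
      _ = m := Real.sqrt_sq hmpos.le
  have hτle : τ ≤ Real.sqrt ((1 + c) * Real.log n) :=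
    Real.sqrt_le_sqrt (by nlinarith)
  have hτm : τ ≤ m := by
    refine le_trans hτle (le_trans ?_ hmge)
    exact Real.sqrt_le_sqrt (by nlinarith)
  have hbound := main_bound n (k n) hkn.1 m τ hτ0 hτm
  refine le_trans (ENNReal.div_le_of_le_mul (by rwa [mul_comm] at hbound)) ?_
  refine ENNReal.ofReal_le_ofReal ?_
  have hdiff : δ * Real.sqrt (Real.log n) ≤ m - τ := by
    have e1 : Real.sqrt (2 * c * Real.log n) = Real.sqrt (2*c) * Real.sqrt (Real.log n) :=
      Real.sqrt_mul (by positivity) _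
    have e2 : Real.sqrt ((1 + c) * Real.log n) = Real.sqrt (1+c) * Real.sqrt (Real.log n) :=
      Real.sqrt_mul (by positivity) _
    have := hτle
    rw [e2] at this
    rw [e1] at hmge
    rw [hδ]
    nlinarith [Real.sqrt_nonneg (Real.log n)]
  clear_value δ m τ
  have hpart1 : Real.exp (-(m - τ)^2/2) ≤ Real.exp (-(δ^2 * Real.log n)/2) := by
    rw [Real.exp_le_exp]
    have h1 : (δ * Real.sqrt (Real.log n))^2 ≤ (m - τ)^2 :=
      pow_le_pow_left₀ (by positivity) hdiff 2
    rw [mul_pow, Real.sq_sqrt hlogpos.le] at h1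
    nlinarith [h1]
  have hpart2 : (n : ℝ) * Real.exp (-(τ - 0)^2/2) = Real.exp (-(ε n * Real.log n)/2) := by
    have hnpos : (0:ℝ) < n := by exact_mod_cast hn1
    rw [show (τ - 0)^2 = τ^2 by ring, hτsq, ← Real.exp_log hnpos, ← Real.exp_add,
      Real.exp_log hnpos, ← Real.exp_log hnpos]
    congr 1
    rw [Real.exp_log hnpos]
    ring
  rw [hgdef]
  dsimp only
  rw [← hpart2]
  exact add_le_add hpart1 (le_refl _)

end
end

section
/- Let (k_n) be integers with 1 ≤ k_n < n/2 and log k_n = o(log n), and suppose there is η > 0 such that ε_n ≤ n^{−1/2−η} for all sufficiently large n, where ε_n ∈ [0,1]. Consider the random graph w on ZMod n in which each unordered pair e of distinct vertices is independently an edge with probability p_n = 1 − ε_n + 2ε_n k_n/(n−1) if e is an edge of x*, and with probability q_n = 2ε_n k_n/(n−1) otherwise. For a vertex j, let E_{x*}(j) (respectively E_w(j)) denote the set of edges of x* (respectively of w) having at least one endpoint in N_{x*}(j) ∪ {j}, where N_{x*}(j) is the neighborhood of j in x*. Then with probability tending to 1 as n → ∞, the following hold simultaneously: (i) E_w(0)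 = E_{x*}(0); (ii) for every vertex j, the symmetric difference E_w(j) △ E_{x*}(j) has at most one element; and (iii) for every vertex j, the pair {j, j + k_n + 1} is not an edge of w. -/
open MeasureTheory Filter
open scoped ENNReal NNReal

noncomputable section

/-- The Bernoulli distribution with success probability `p`, as a measure on `ℝ`
(mass `p` at `1` and mass `1-p` at `0`). -/
def bernoulliReal (p : ℝ) : Measure ℝ :=
  ENNReal.ofReal p • Measure.dirac 1 + ENNReal.ofReal (1 - p) • Measure.dirac 0

/-- The edge set of the observed random graph: pairs of distinct vertices with weight `1`. -/
def wEdgeSet (n : ℕ) (w : Sym2 (ZMod n) → ℝ) : Set (Sym2 (ZMod n)) :=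
  {e | ¬ e.IsDiag ∧ w e = 1}

/-- `E_{x*}(j)`: edges of the hidden `2k`-NN graph having at least one endpoint in
`N_{x*}(j) ∪ {j}`. -/
def ExSet (n k : ℕ) (j : ZMod n) : Set (Sym2 (ZMod n)) :=
  {e ∈ (xstar n k).edgeSet | ∃ u ∈ e, u ∈ insert j ((xstar n k).neighborSet j)}

/-- `E_w(j)`: edges of the observed graph having at least one endpoint in
`N_{x*}(j) ∪ {j}`. -/
def EwSet (n k : ℕ) (w : Sym2 (ZMod n) → ℝ) (j : ZMod n) : Set (Sym2 (ZMod n)) :=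
  {e ∈ wEdgeSet n w | ∃ u ∈ e, u ∈ insert j ((xstar n k).neighborSet j)}

/-! ### Auxiliary material for the proof -/

open scoped Classical

namespace SmallWorldAux

variable {n k : ℕ}

lemma cycDist_self (a : ZMod n) : cycDist a a = 0 := by simp [cycDist, sub_self]

lemma xstar_adj (u v : ZMod n) : (xstar n k).Adj u v ↔ u ≠ v ∧ cycDist u v ≤ k := Iff.rfl

lemma mem_xstar_edgeSet (u v : ZMod n) :
    s(u, v) ∈ (xstar n k).edgeSet ↔ u ≠ v ∧ cycDist u v ≤ k := by
  rw [SimpleGraph.mem_edgeSet]; exact Iff.rfl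

lemma insert_neighborSet (j : ZMod n) :
    insert j ((xstar n k).neighborSet j) = {v | cycDist v j ≤ k} := by
  ext v
  simp only [Set.mem_insert_iff, SimpleGraph.mem_neighborSet, xstar_adj, Set.mem_setOf_eq]
  constructor
  · rintro (rfl | ⟨-, h⟩)
    · simp [cycDist_self]
    · unfold cycDist at *; omega
  · intro h
    by_cases hv : v = j
    · exact Or.inl hv
    · exact Or.inr ⟨Ne.symm hv, by unfold cycDist at *; omega⟩

/-- The closed ball of radius `k` around `j` in the cyclic metric. -/
def ball (n k : ℕ) [NeZero n] (j : ZMod n) : Finset (ZMod n) :=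
  Finset.univ.filter fun v => cycDist v j ≤ k

variable [NeZero n]

lemma card_ball (j : ZMod n) : (ball n k j).card ≤ 2 * k + 2 := by
  have h1 : (Finset.univ.filter fun v : ZMod n => (v - j).val ≤ k).card ≤ k + 1 := by
    have h := Finset.card_le_card_of_injOn
      (s := Finset.univ.filter fun v : ZMod n => (v - j).val ≤ k)
      (t := Finset.range (k + 1))
      (fun v => (v - j).val)
      (by intro v hv
          simp only [Finset.mem_coe, Finset.mem_filter] at hv
          simp only [Finset.mem_coe, Finset.mem_range]
          omega)
      (by intro a _ b _ hab
          exact sub_left_injective (ZMod.val_injective n hab))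
    exact h.trans_eq (Finset.card_range _)
  have h2 : (Finset.univ.filter fun v : ZMod n => (j - v).val ≤ k).card ≤ k + 1 := by
    have h := Finset.card_le_card_of_injOn
      (s := Finset.univ.filter fun v : ZMod n => (j - v).val ≤ k)
      (t := Finset.range (k + 1))
      (fun v => (j - v).val)
      (by intro v hv
          simp only [Finset.mem_coe, Finset.mem_filter] at hv
          simp only [Finset.mem_coe, Finset.mem_range]
          omega)
      (by intro a _ b _ hab
          exact sub_right_injective (ZMod.val_injective n hab))
    exact h.trans_eq (Finset.card_range _)
  have hsub : ball n k j ⊆ (Finset.univ.filter fun v : ZMod n => (v - j).val ≤ k) ∪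
      (Finset.univ.filter fun v : ZMod n => (j - v).val ≤ k) := by
    intro v hv
    simp only [ball, Finset.mem_filter, Finset.mem_union, Finset.mem_univ, true_and] at *
    unfold cycDist at hv
    omega
  calc (ball n k j).card ≤ _ := Finset.card_le_card hsub
    _ ≤ _ := Finset.card_union_le _ _
    _ ≤ 2 * k + 2 := by omega

/-- Pairs having an endpoint at cyclic distance at most `k` from `j`. -/
def Rset (n k : ℕ) [NeZero n] (j : ZMod n) : Finset (Sym2 (ZMod n)) :=
  Finset.univ.filter fun e => ∃ u ∈ e, cycDist u j ≤ k

lemma mem_Rset {j : ZMod n} {e : Sym2 (ZMod n)} :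
    e ∈ Rset n k j ↔ ∃ u ∈ e, cycDist u j ≤ k := by simp [Rset]

lemma card_Rset (j : ZMod n) : (Rset n k j).card ≤ (2 * k + 2) * n := by
  have hsub : Rset n k j ⊆
      (ball n k j ×ˢ (Finset.univ : Finset (ZMod n))).image fun p => s(p.1, p.2) := by
    intro e he
    rw [mem_Rset] at he
    obtain ⟨u, hu, hcd⟩ := he
    exact Finset.mem_image.mpr ⟨(u, Sym2.Mem.other hu),
      Finset.mem_product.mpr ⟨by simp [ball, hcd], Finset.mem_univ _⟩, Sym2.other_spec hu⟩
  calc (Rset n k j).card ≤ _ := Finset.card_le_card hsub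
    _ ≤ (ball n k j ×ˢ (Finset.univ : Finset (ZMod n))).card := Finset.card_image_le
    _ = (ball n k j).card * n := by rw [Finset.card_product, Finset.card_univ, ZMod.card]
    _ ≤ (2 * k + 2) * n := Nat.mul_le_mul_right _ (card_ball j)

lemma card_Rset_edges (j : ZMod n) :
    ((Rset n k j).filter fun e => e ∈ (xstar n k).edgeSet).card ≤ (2 * k + 2) * (2 * k + 2) := by
  have hsub : (Rset n k j).filter (fun e => e ∈ (xstar n k).edgeSet) ⊆
      (ball n k j ×ˢ ball n k 0).image fun p => s(p.1, p.1 + p.2) := by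
    intro e he
    rw [Finset.mem_filter, mem_Rset] at he
    obtain ⟨⟨u, hu, hcd⟩, hedge⟩ := he
    have hspec := Sym2.other_spec hu
    set v := Sym2.Mem.other hu with hv
    rw [← hspec, SimpleGraph.mem_edgeSet] at hedge
    have hadj : cycDist u v ≤ k := hedge.2
    refine Finset.mem_image.mpr ⟨(u, v - u), Finset.mem_product.mpr ⟨by simp [ball, hcd], ?_⟩, ?_⟩
    · have hz : cycDist (v - u) 0 = cycDist u v := by
        unfold cycDist
        rw [sub_zero, zero_sub, neg_sub]
        exact min_comm _ _
      simp [ball, hz, hadj]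
    · have : u + (v - u) = v := by ring
      rw [this]; exact hspec
  calc _ ≤ _ := Finset.card_le_card hsub
    _ ≤ (ball n k j ×ˢ ball n k 0).card := Finset.card_image_le
    _ = (ball n k j).card * (ball n k 0).card := Finset.card_product _ _
    _ ≤ (2 * k + 2) * (2 * k + 2) := Nat.mul_le_mul (card_ball j) (card_ball 0)

lemma pair_not_edge (hn : 2 * k + 2 ≤ n) (j : ZMod n) :
    s(j, j + (k : ZMod n) + 1) ∉ (xstar n k).edgeSet := by
  rw [mem_xstar_edgeSet]
  rintro ⟨-, hle⟩
  have hk1n : k + 1 < n := by omega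
  have hval : ((k : ZMod n) + 1).val = k + 1 := by
    have h : ((k : ZMod n) + 1) = ((k + 1 : ℕ) : ZMod n) := by push_cast; ring
    rw [h, ZMod.val_cast_of_lt hk1n]
  have hne : ((k : ZMod n) + 1) ≠ 0 := by
    intro h; rw [h, ZMod.val_zero] at hval; omega
  have h2 : (j - (j + (k : ZMod n) + 1)) = -((k : ZMod n) + 1) := by ring
  have h3 : ((j + (k : ZMod n) + 1) - j) = (k : ZMod n) + 1 := by ring
  unfold cycDist at hle
  rw [h2, h3, ZMod.neg_val, if_neg hne, hval] at hle
  rcases min_le_iff.mp hle with h | h <;> omega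

/-! ### Bernoulli facts -/

lemma bernoulli_prob {p : ℝ} (h0 : 0 ≤ p) (h1 : p ≤ 1) :
    IsProbabilityMeasure (bernoulliReal p) := by
  constructor
  rw [bernoulliReal]
  simp only [Measure.coe_add, Pi.add_apply, Measure.smul_apply, smul_eq_mul,
    measure_univ, mul_one]
  rw [← ENNReal.ofReal_add h0 (by linarith)]
  norm_num

lemma bernoulli_one (p : ℝ) : bernoulliReal p {1} = ENNReal.ofReal p := by
  rw [bernoulliReal]
  simp only [Measure.coe_add, Pi.add_apply, Measure.smul_apply, smul_eq_mul,
    Measure.dirac_apply]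
  rw [Set.indicator_of_mem (by simp), Set.indicator_of_notMem (by norm_num)]
  simp

lemma bernoulli_compl_one (p : ℝ) : bernoulliReal p {1}ᶜ = ENNReal.ofReal (1 - p) := by
  rw [bernoulliReal]
  simp only [Measure.coe_add, Pi.add_apply, Measure.smul_apply, smul_eq_mul,
    Measure.dirac_apply]
  rw [Set.indicator_of_notMem (by simp), Set.indicator_of_mem (by norm_num)]
  simp

/-! ### The product measure -/

/-- The family of edge-weight laws. -/
def nu (n k : ℕ) (P Q : Measure ℝ) : Sym2 (ZMod n) → Measure ℝ :=
  fun e => if e ∈ (xstar n k).edgeSet then P else Q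

instance nu_prob (P Q : Measure ℝ) [IsProbabilityMeasure P] [IsProbabilityMeasure Q]
    (e : Sym2 (ZMod n)) : IsProbabilityMeasure (nu n k P Q e) := by
  unfold nu; split <;> infer_instance

lemma edgeMeasure_eq (P Q : Measure ℝ) (hn : n ≠ 0) :
    edgeMeasure n P Q (xstar n k) = Measure.pi (nu n k P Q) := by
  rw [edgeMeasure, dif_neg hn]
  rfl

lemma pi_single (ν : Sym2 (ZMod n) → Measure ℝ) [∀ e, IsProbabilityMeasure (ν e)]
    (i : Sym2 (ZMod n)) (A : Set ℝ) :
    Measure.pi ν {w | w i ∈ A} = ν i A := by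
  have hset : {w : Sym2 (ZMod n) → ℝ | w i ∈ A} =
      Set.pi Set.univ (fun t => if t = i then A else Set.univ) := by
    ext w
    simp only [Set.mem_setOf_eq, Set.mem_pi, Set.mem_univ, forall_true_left]
    constructor
    · intro h t
      by_cases ht : t = i
      · subst ht; simpa using h
      · simp [ht]
    · intro h
      have := h i
      simpa using this
  rw [hset, Measure.pi_pi]
  rw [Finset.prod_eq_single i (fun b _ hb => by simp [hb])
    (fun h => absurd (Finset.mem_univ i) h)]
  simp

lemma pi_double (ν : Sym2 (ZMod n) → Measure ℝ) [∀ e, IsProbabilityMeasure (ν e)]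
    (i j : Sym2 (ZMod n)) (hij : i ≠ j) (A B : Set ℝ) :
    Measure.pi ν ({w | w i ∈ A} ∩ {w | w j ∈ B}) = ν i A * ν j B := by
  have hset : {w : Sym2 (ZMod n) → ℝ | w i ∈ A} ∩ {w | w j ∈ B} =
      Set.pi Set.univ (fun t => if t = i then A else if t = j then B else Set.univ) := by
    ext w
    simp only [Set.mem_inter_iff, Set.mem_setOf_eq, Set.mem_pi, Set.mem_univ, forall_true_left]
    constructor
    · rintro ⟨h1, h2⟩ t
      by_cases ht : t = i
      · subst ht; simpa using h1
      · by_cases ht' : t = j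
        · subst ht'; simp [ht, h2]
        · simp [ht, ht']
    · intro h
      have h1 := h i; have h2 := h j
      rw [if_pos rfl] at h1
      rw [if_neg hij.symm, if_pos rfl] at h2
      exact ⟨h1, h2⟩
  rw [hset, Measure.pi_pi]
  have hone : ∀ t ∈ (Finset.univ : Finset (Sym2 (ZMod n))), t ∉ ({i, j} : Finset _) →
      ν t (if t = i then A else if t = j then B else Set.univ) = 1 := by
    intro t _ ht
    simp only [Finset.mem_insert, Finset.mem_singleton] at ht
    push_neg at ht
    simp [ht.1, ht.2]
  rw [← Finset.prod_subset (Finset.subset_univ ({i, j} : Finset _)) hone,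
    Finset.prod_pair hij]
  simp [hij.symm]

/-! ### Discrepancy events -/

/-- The "bad value" set for the weight of a pair. -/
def Sdisc (n k : ℕ) (e : Sym2 (ZMod n)) : Set ℝ :=
  if e ∈ (xstar n k).edgeSet then {1}ᶜ else if e.IsDiag then ∅ else {1}

lemma symmDiff_mem (w : Sym2 (ZMod n) → ℝ) (j : ZMod n) (e : Sym2 (ZMod n))
    (he : e ∈ symmDiff (EwSet n k w j) (ExSet n k j)) :
    e ∈ Rset n k j ∧ w e ∈ Sdisc n k e := by
  rw [Set.mem_symmDiff] at he
  rcases he with ⟨h1, h2⟩ | ⟨h1, h2⟩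
  · obtain ⟨⟨hnd, hw1⟩, u, hu, hins⟩ := h1
    rw [insert_neighborSet, Set.mem_setOf_eq] at hins
    have hne : e ∉ (xstar n k).edgeSet := fun hedge =>
      h2 ⟨hedge, u, hu, by rw [insert_neighborSet]; exact hins⟩
    refine ⟨mem_Rset.mpr ⟨u, hu, hins⟩, ?_⟩
    rw [Sdisc, if_neg hne, if_neg hnd]
    exact hw1
  · obtain ⟨hedge, u, hu, hins⟩ := h1
    rw [insert_neighborSet, Set.mem_setOf_eq] at hins
    have hnd : ¬ e.IsDiag := (xstar n k).not_isDiag_of_mem_edgeSet hedge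
    refine ⟨mem_Rset.mpr ⟨u, hu, hins⟩, ?_⟩
    rw [Sdisc, if_pos hedge]
    have hw : w e ≠ 1 := by
      intro h1'
      exact h2 ⟨⟨hnd, h1'⟩, u, hu, by rw [insert_neighborSet]; exact hins⟩
    simpa using hw

/-! ### The per-vertex discrepancy sum bound -/

lemma sum_disc_le (hn : 2 * k + 2 ≤ n) (hk1 : 1 ≤ k) {ε : ℝ} (hε0 : 0 ≤ ε) (hε1 : ε ≤ 1)
    (j : ZMod n) :
    ∑ e ∈ Rset n k j,
      (nu n k (bernoulliReal (1 - ε + 2 * ε * k / ((n : ℝ) - 1)))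
        (bernoulliReal (2 * ε * k / ((n : ℝ) - 1))) e) (Sdisc n k e)
      ≤ ENNReal.ofReal (32 * k ^ 2 * ε) := by
  set P := bernoulliReal (1 - ε + 2 * ε * k / ((n : ℝ) - 1))
  set Q := bernoulliReal (2 * ε * k / ((n : ℝ) - 1))
  have hN4 : (4 : ℝ) ≤ (n : ℝ) := by
    have : (4 : ℕ) ≤ n := by omega
    exact_mod_cast this
  have hD : (1 : ℝ) ≤ (n : ℝ) - 1 := by linarith
  have hq0 : 0 ≤ 2 * ε * k / ((n : ℝ) - 1) := by positivity
  have hterm : ∀ e ∈ Rset n k j, (nu n k P Q e) (Sdisc n k e) ≤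
      (if e ∈ (xstar n k).edgeSet then ENNReal.ofReal ε
        else ENNReal.ofReal (2 * ε * k / ((n : ℝ) - 1))) := by
    intro e _
    rw [nu, Sdisc]
    by_cases he : e ∈ (xstar n k).edgeSet
    · rw [if_pos he, if_pos he, if_pos he]
      rw [show P = bernoulliReal (1 - ε + 2 * ε * k / ((n : ℝ) - 1)) from rfl,
        bernoulli_compl_one]
      apply ENNReal.ofReal_le_ofReal
      linarith
    · rw [if_neg he, if_neg he, if_neg he]
      by_cases hd : e.IsDiag
      · simp [hd]
      · rw [if_neg hd, show Q = bernoulliReal (2 * ε * k / ((n : ℝ) - 1)) from rfl,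
          bernoulli_one]
  calc ∑ e ∈ Rset n k j, (nu n k P Q e) (Sdisc n k e)
      ≤ ∑ e ∈ Rset n k j, (if e ∈ (xstar n k).edgeSet then ENNReal.ofReal ε
          else ENNReal.ofReal (2 * ε * k / ((n : ℝ) - 1))) := Finset.sum_le_sum hterm
    _ = ∑ e ∈ (Rset n k j).filter (fun e => e ∈ (xstar n k).edgeSet),
          (if e ∈ (xstar n k).edgeSet then ENNReal.ofReal ε
            else ENNReal.ofReal (2 * ε * k / ((n : ℝ) - 1)))
        + ∑ e ∈ (Rset n k j).filter (fun e => ¬ e ∈ (xstar n k).edgeSet),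
          (if e ∈ (xstar n k).edgeSet then ENNReal.ofReal ε
            else ENNReal.ofReal (2 * ε * k / ((n : ℝ) - 1))) :=
        (Finset.sum_filter_add_sum_filter_not _ _ _).symm
    _ ≤ ((2 * k + 2) * (2 * k + 2) : ℕ) * ENNReal.ofReal ε
        + ((2 * k + 2) * n : ℕ) * ENNReal.ofReal (2 * ε * k / ((n : ℝ) - 1)) := by
        gcongr ?_ + ?_
        · rw [Finset.sum_congr rfl (fun e he => if_pos (Finset.mem_filter.mp he).2),
            Finset.sum_const, nsmul_eq_mul]
          gcongr
          exact_mod_cast card_Rset_edges j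
        · rw [Finset.sum_congr rfl (fun e he => if_neg (Finset.mem_filter.mp he).2),
            Finset.sum_const, nsmul_eq_mul]
          gcongr
          exact_mod_cast (Finset.card_le_card (Finset.filter_subset _ _)).trans (card_Rset j)
    _ ≤ ENNReal.ofReal (32 * k ^ 2 * ε) := by
        rw [← ENNReal.ofReal_natCast ((2 * k + 2) * (2 * k + 2)),
          ← ENNReal.ofReal_natCast ((2 * k + 2) * n),
          ← ENNReal.ofReal_mul (by positivity), ← ENNReal.ofReal_mul (by positivity),
          ← ENNReal.ofReal_add (by positivity) (by positivity)]
        apply ENNReal.ofReal_le_ofReal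
        have hk1' : (1 : ℝ) ≤ (k : ℝ) := by exact_mod_cast hk1
        have hcast1 : (((2 * k + 2) * (2 * k + 2) : ℕ) : ℝ) = (2 * k + 2) * (2 * k + 2) := by
          push_cast; ring
        have hcast2 : (((2 * k + 2) * n : ℕ) : ℝ) = (2 * k + 2) * n := by push_cast; ring
        rw [hcast1, hcast2]
        have h2k : (2 * (k : ℝ) + 2) ≤ 4 * k := by linarith
        have hterm1 : (2 * (k : ℝ) + 2) * (2 * k + 2) * ε ≤ 16 * k ^ 2 * ε := by
          have : (2 * (k : ℝ) + 2) * (2 * k + 2) ≤ 16 * k ^ 2 := by nlinarith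
          nlinarith
        have hterm2 : (2 * (k : ℝ) + 2) * n * (2 * ε * k / ((n : ℝ) - 1)) ≤ 16 * k ^ 2 * ε := by
          have hND : (n : ℝ) ≤ 2 * ((n : ℝ) - 1) := by linarith
          have h1 : (2 * (k : ℝ) + 2) * n * (2 * ε * k / ((n : ℝ) - 1))
              = (2 * k + 2) * (2 * ε * k) * ((n : ℝ) / ((n : ℝ) - 1)) := by
            field_simp
          rw [h1]
          have h2 : (n : ℝ) / ((n : ℝ) - 1) ≤ 2 := by
            rw [div_le_iff₀ (by linarith)]
            linarith
          calc (2 * (k : ℝ) + 2) * (2 * ε * k) * ((n : ℝ) / ((n : ℝ) - 1))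
              ≤ (2 * (k : ℝ) + 2) * (2 * ε * k) * 2 := by
                apply mul_le_mul_of_nonneg_left h2 (by positivity)
            _ ≤ 16 * k ^ 2 * ε := by nlinarith
        linarith
  -- done

/-! ### The main probability bound for a fixed `n` -/

lemma main_bound (n k : ℕ) (ε : ℝ) (hn : 2 * k + 2 ≤ n) (hk1 : 1 ≤ k)
    (hε0 : 0 ≤ ε) (hε1 : ε ≤ 1) :
    1 ≤ edgeMeasure n
          (bernoulliReal (1 - ε + 2 * ε * k / ((n : ℝ) - 1)))
          (bernoulliReal (2 * ε * k / ((n : ℝ) - 1)))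
          (xstar n k)
          {w | EwSet n k w 0 = ExSet n k 0 ∧
            (∀ j : ZMod n, (symmDiff (EwSet n k w j) (ExSet n k j)).ncard ≤ 1) ∧
            (∀ j : ZMod n, s(j, j + (k : ZMod n) + 1) ∉ wEdgeSet n w)}
        + ENNReal.ofReal (32 * k ^ 2 * ε + n * (32 * k ^ 2 * ε) ^ 2 + 4 * k * ε) := by
  haveI : NeZero n := ⟨by omega⟩
  have hN4 : (4 : ℝ) ≤ (n : ℝ) := by
    have : (4 : ℕ) ≤ n := by omega
    exact_mod_cast this
  have hD : (1 : ℝ) ≤ (n : ℝ) - 1 := by linarith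
  have h2k : (2 * k : ℝ) ≤ (n : ℝ) - 1 := by
    have : (2 * k + 1 : ℕ) ≤ n := by omega
    have h' : ((2 * k + 1 : ℕ) : ℝ) ≤ (n : ℝ) := by exact_mod_cast this
    push_cast at h'
    linarith
  have hk0 : (0 : ℝ) ≤ (k : ℝ) := by positivity
  have hq0 : 0 ≤ 2 * ε * k / ((n : ℝ) - 1) := by positivity
  have hqε : 2 * ε * k / ((n : ℝ) - 1) ≤ ε := by
    rw [div_le_iff₀ (by linarith)]
    nlinarith
  haveI hP : IsProbabilityMeasure (bernoulliReal (1 - ε + 2 * ε * k / ((n : ℝ) - 1))) :=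
    bernoulli_prob (by linarith) (by linarith)
  haveI hQ : IsProbabilityMeasure (bernoulliReal (2 * ε * k / ((n : ℝ) - 1))) :=
    bernoulli_prob hq0 (by linarith)
  set P := bernoulliReal (1 - ε + 2 * ε * k / ((n : ℝ) - 1)) with hPdef
  set Q := bernoulliReal (2 * ε * k / ((n : ℝ) - 1)) with hQdef
  rw [edgeMeasure_eq P Q (by omega)]
  set μ := Measure.pi (nu n k P Q) with hμdef
  haveI : IsProbabilityMeasure μ := by rw [hμdef]; infer_instance
  set A : Set (Sym2 (ZMod n) → ℝ) :=
    {w | EwSet n k w 0 = ExSet n k 0 ∧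
      (∀ j : ZMod n, (symmDiff (EwSet n k w j) (ExSet n k j)).ncard ≤ 1) ∧
      (∀ j : ZMod n, s(j, j + (k : ZMod n) + 1) ∉ wEdgeSet n w)} with hAdef
  -- the three bad events
  set D : Sym2 (ZMod n) → Set (Sym2 (ZMod n) → ℝ) :=
    fun e => {w | w e ∈ Sdisc n k e} with hDdef
  set U0 : Set (Sym2 (ZMod n) → ℝ) := ⋃ e ∈ Rset n k 0, D e with hU0def
  set U1 : Set (Sym2 (ZMod n) → ℝ) :=
    ⋃ j : ZMod n, ⋃ pr ∈ (Rset n k j).offDiag, (D pr.1 ∩ D pr.2) with hU1def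
  set U2 : Set (Sym2 (ZMod n) → ℝ) :=
    ⋃ j : ZMod n, {w | w s(j, j + (k : ZMod n) + 1) ∈ ({1} : Set ℝ)} with hU2def
  have hcompl : Aᶜ ⊆ U0 ∪ (U1 ∪ U2) := by
    intro w hw
    by_cases h1 : EwSet n k w 0 = ExSet n k 0
    · by_cases h2 : ∀ j : ZMod n, (symmDiff (EwSet n k w j) (ExSet n k j)).ncard ≤ 1
      · by_cases h3 : ∀ j : ZMod n, s(j, j + (k : ZMod n) + 1) ∉ wEdgeSet n w
        · exact absurd ⟨h1, h2, h3⟩ hw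
        · push_neg at h3
          obtain ⟨j, hj⟩ := h3
          refine Or.inr (Or.inr (Set.mem_iUnion.mpr ⟨j, ?_⟩))
          exact hj.2
      · push_neg at h2
        obtain ⟨j, hj⟩ := h2
        have h1lt : 1 < (symmDiff (EwSet n k w j) (ExSet n k j)).ncard := by omega
        obtain ⟨e, he, f, hf, hef⟩ := (Set.one_lt_ncard (Set.toFinite _)).mp h1lt
        obtain ⟨heR, heS⟩ := symmDiff_mem w j e he
        obtain ⟨hfR, hfS⟩ := symmDiff_mem w j f hf
        refine Or.inr (Or.inl (Set.mem_iUnion.mpr ⟨j, ?_⟩))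
        exact Set.mem_biUnion (show (e, f) ∈ (Rset n k j).offDiag from
            Finset.mem_offDiag.mpr ⟨heR, hfR, hef⟩)
          (show w ∈ D (e, f).1 ∩ D (e, f).2 from ⟨heS, hfS⟩)
    · obtain ⟨e, he⟩ := Set.symmDiff_nonempty.mpr h1
      obtain ⟨heR, heS⟩ := symmDiff_mem w 0 e he
      exact Or.inl (Set.mem_biUnion heR heS)
  have hsum : (1 : ℝ≥0∞) ≤ μ A + μ Aᶜ := by
    calc (1 : ℝ≥0∞) = μ Set.univ := measure_univ.symm
      _ = μ (A ∪ Aᶜ) := by rw [Set.union_compl_self]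
      _ ≤ μ A + μ Aᶜ := measure_union_le _ _
  have hbadsum : μ Aᶜ ≤
      ENNReal.ofReal (32 * k ^ 2 * ε + n * (32 * k ^ 2 * ε) ^ 2 + 4 * k * ε) := by
    have hU0 : μ U0 ≤ ENNReal.ofReal (32 * k ^ 2 * ε) := by
      calc μ U0 ≤ ∑ e ∈ Rset n k 0, μ (D e) := measure_biUnion_finset_le _ _
        _ = ∑ e ∈ Rset n k 0, (nu n k P Q e) (Sdisc n k e) := by
            refine Finset.sum_congr rfl fun e _ => ?_
            exact pi_single (nu n k P Q) e (Sdisc n k e)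
        _ ≤ ENNReal.ofReal (32 * k ^ 2 * ε) := sum_disc_le hn hk1 hε0 hε1 0
    have hSj : ∀ j : ZMod n, ∑ e ∈ Rset n k j, (nu n k P Q e) (Sdisc n k e)
        ≤ ENNReal.ofReal (32 * k ^ 2 * ε) := fun j => sum_disc_le hn hk1 hε0 hε1 j
    have hU1 : μ U1 ≤ ENNReal.ofReal ((n : ℝ) * (32 * k ^ 2 * ε) ^ 2) := by
      calc μ U1 ≤ ∑' j : ZMod n, μ (⋃ pr ∈ (Rset n k j).offDiag, (D pr.1 ∩ D pr.2)) :=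
            measure_iUnion_le _
        _ = ∑ j : ZMod n, μ (⋃ pr ∈ (Rset n k j).offDiag, (D pr.1 ∩ D pr.2)) := tsum_fintype _
        _ ≤ ∑ j : ZMod n, ENNReal.ofReal (32 * k ^ 2 * ε) ^ 2 := by
            refine Finset.sum_le_sum fun j _ => ?_
            calc μ (⋃ pr ∈ (Rset n k j).offDiag, (D pr.1 ∩ D pr.2))
                ≤ ∑ pr ∈ (Rset n k j).offDiag, μ (D pr.1 ∩ D pr.2) :=
                  measure_biUnion_finset_le _ _
              _ = ∑ pr ∈ (Rset n k j).offDiag,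
                    (nu n k P Q pr.1) (Sdisc n k pr.1) * (nu n k P Q pr.2) (Sdisc n k pr.2) := by
                  refine Finset.sum_congr rfl fun pr hpr => ?_
                  have hne : pr.1 ≠ pr.2 := (Finset.mem_offDiag.mp hpr).2.2
                  exact pi_double (nu n k P Q) pr.1 pr.2 hne _ _
              _ ≤ ∑ pr ∈ Rset n k j ×ˢ Rset n k j,
                    (nu n k P Q pr.1) (Sdisc n k pr.1) * (nu n k P Q pr.2) (Sdisc n k pr.2) := by
                  apply Finset.sum_le_sum_of_subset
                  intro pr hpr
                  rw [Finset.mem_offDiag] at hpr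
                  exact Finset.mem_product.mpr ⟨hpr.1, hpr.2.1⟩
              _ = (∑ e ∈ Rset n k j, (nu n k P Q e) (Sdisc n k e))
                    * (∑ e ∈ Rset n k j, (nu n k P Q e) (Sdisc n k e)) := by
                  rw [Finset.sum_mul_sum]
                  exact Finset.sum_product _ _ _
              _ ≤ ENNReal.ofReal (32 * k ^ 2 * ε) * ENNReal.ofReal (32 * k ^ 2 * ε) := by
                  exact mul_le_mul' (hSj j) (hSj j)
              _ = ENNReal.ofReal (32 * k ^ 2 * ε) ^ 2 := (sq _).symm
        _ = (Fintype.card (ZMod n)) • ENNReal.ofReal (32 * k ^ 2 * ε) ^ 2 := by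
            rw [Finset.sum_const, Finset.card_univ]
        _ = ENNReal.ofReal ((n : ℝ) * (32 * k ^ 2 * ε) ^ 2) := by
            rw [ZMod.card, nsmul_eq_mul, ← ENNReal.ofReal_pow (by positivity),
              ← ENNReal.ofReal_natCast n, ← ENNReal.ofReal_mul (by positivity)]
    have hU2 : μ U2 ≤ ENNReal.ofReal (4 * k * ε) := by
      calc μ U2 ≤ ∑' j : ZMod n, μ {w | w s(j, j + (k : ZMod n) + 1) ∈ ({1} : Set ℝ)} :=
            measure_iUnion_le _
        _ = ∑ j : ZMod n, μ {w | w s(j, j + (k : ZMod n) + 1) ∈ ({1} : Set ℝ)} := tsum_fintype _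
        _ = ∑ j : ZMod n, (nu n k P Q s(j, j + (k : ZMod n) + 1)) ({1} : Set ℝ) := by
            refine Finset.sum_congr rfl fun j _ => ?_
            exact pi_single (nu n k P Q) _ _
        _ = ∑ j : ZMod n, ENNReal.ofReal (2 * ε * k / ((n : ℝ) - 1)) := by
            refine Finset.sum_congr rfl fun j _ => ?_
            rw [nu, if_neg (pair_not_edge hn j), hQdef, bernoulli_one]
        _ = (Fintype.card (ZMod n)) • ENNReal.ofReal (2 * ε * k / ((n : ℝ) - 1)) := by
            rw [Finset.sum_const, Finset.card_univ]
        _ ≤ ENNReal.ofReal (4 * k * ε) := by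
            rw [ZMod.card, nsmul_eq_mul, ← ENNReal.ofReal_natCast n,
              ← ENNReal.ofReal_mul (by positivity)]
            apply ENNReal.ofReal_le_ofReal
            rw [mul_div_assoc']
            rw [div_le_iff₀ (by linarith)]
            nlinarith [mul_nonneg (mul_nonneg hε0 hk0) (show (0:ℝ) ≤ (n:ℝ) - 2 by linarith)]
    calc μ Aᶜ ≤ μ (U0 ∪ (U1 ∪ U2)) := measure_mono hcompl
      _ ≤ μ U0 + μ (U1 ∪ U2) := measure_union_le _ _
      _ ≤ μ U0 + (μ U1 + μ U2) := by gcongr; exact measure_union_le _ _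
      _ ≤ ENNReal.ofReal (32 * k ^ 2 * ε) + (ENNReal.ofReal ((n : ℝ) * (32 * k ^ 2 * ε) ^ 2)
            + ENNReal.ofReal (4 * k * ε)) := by gcongr
      _ = ENNReal.ofReal (32 * k ^ 2 * ε + n * (32 * k ^ 2 * ε) ^ 2 + 4 * k * ε) := by
          rw [← ENNReal.ofReal_add (by positivity) (by positivity),
            ← ENNReal.ofReal_add (by positivity) (by positivity)]
          ring_nf
  calc (1 : ℝ≥0∞) ≤ μ A + μ Aᶜ := hsum
    _ ≤ μ A + ENNReal.ofReal (32 * k ^ 2 * ε + n * (32 * k ^ 2 * ε) ^ 2 + 4 * k * ε) := by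
        gcongr

lemma prob_le_one' (n k : ℕ) (ε : ℝ) (hn : 2 * k + 2 ≤ n) (hk1 : 1 ≤ k)
    (hε0 : 0 ≤ ε) (hε1 : ε ≤ 1) (S : Set (Sym2 (ZMod n) → ℝ)) :
    edgeMeasure n
      (bernoulliReal (1 - ε + 2 * ε * k / ((n : ℝ) - 1)))
      (bernoulliReal (2 * ε * k / ((n : ℝ) - 1)))
      (xstar n k) S ≤ 1 := by
  haveI : NeZero n := ⟨by omega⟩
  have hN4 : (4 : ℝ) ≤ (n : ℝ) := by
    have : (4 : ℕ) ≤ n := by omega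
    exact_mod_cast this
  have h2k : (2 * k : ℝ) ≤ (n : ℝ) - 1 := by
    have : (2 * k + 1 : ℕ) ≤ n := by omega
    have h' : ((2 * k + 1 : ℕ) : ℝ) ≤ (n : ℝ) := by exact_mod_cast this
    push_cast at h'
    linarith
  have hD : (1 : ℝ) ≤ (n : ℝ) - 1 := by linarith
  have hq0 : 0 ≤ 2 * ε * k / ((n : ℝ) - 1) := div_nonneg (by positivity) (by linarith)
  have hqε : 2 * ε * k / ((n : ℝ) - 1) ≤ ε := by
    rw [div_le_iff₀ (by linarith)]
    nlinarith
  haveI : IsProbabilityMeasure (bernoulliReal (1 - ε + 2 * ε * k / ((n : ℝ) - 1))) :=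
    bernoulli_prob (by linarith) (by linarith)
  haveI : IsProbabilityMeasure (bernoulliReal (2 * ε * k / ((n : ℝ) - 1))) :=
    bernoulli_prob hq0 (by linarith)
  rw [edgeMeasure_eq _ _ (by omega)]
  exact prob_le_one

/-- `K * E ≤ x ^ e` from bounds `K ≤ x ^ c`, `E ≤ x ^ d` with `c + d ≤ e`. -/
lemma rpow_mul_le {x K E c d e : ℝ} (hx : 1 ≤ x) (hK0 : 0 ≤ K) (hE0 : 0 ≤ E)
    (hK : K ≤ x ^ c) (hE : E ≤ x ^ d) (hcd : c + d ≤ e) : K * E ≤ x ^ e := by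
  have hx0 : (0 : ℝ) < x := by linarith
  calc K * E ≤ x ^ c * x ^ d :=
        mul_le_mul hK hE hE0 (Real.rpow_nonneg (by linarith) c)
    _ = x ^ (c + d) := (Real.rpow_add hx0 _ _).symm
    _ ≤ x ^ e := Real.rpow_le_rpow_of_exponent_le hx hcd

end SmallWorldAux

/-- **Key events for the greedy algorithm in the small-world model (Theorem 4).**
In the Watts–Strogatz-type model where edges of `x*` are kept with probability
`p_n = 1 - ε_n + 2ε_n k_n/(n-1)` and non-edges appear with probability
`q_n = 2ε_n k_n/(n-1)`, if `ε_n ≤ n^(-1/2-η)` for some `η > 0`, then with probability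
tending to one: (i) the observed and true edge sets agree near the vertex `0`;
(ii) near every vertex they differ by at most one edge; and (iii) no pair
`{j, j+k_n+1}` is an observed edge. -/
theorem smallworld_events_whp
    (k : ℕ → ℕ) (ε : ℕ → ℝ)
    (hk : ∀ᶠ n in atTop, 1 ≤ k n ∧ 2 * k n < n)
    (hlogk : Tendsto (fun n => Real.log (k n) / Real.log n) atTop (nhds 0))
    (hε01 : ∀ n, ε n ∈ Set.Icc (0 : ℝ) 1)
    (hη : ∃ η : ℝ, 0 < η ∧ ∀ᶠ n in atTop, ε n ≤ (n : ℝ) ^ (-(1 / 2 : ℝ) - η)) :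
    Tendsto (fun n =>
        edgeMeasure n
          (bernoulliReal (1 - ε n + 2 * ε n * k n / ((n : ℝ) - 1)))
          (bernoulliReal (2 * ε n * k n / ((n : ℝ) - 1)))
          (xstar n (k n))
          {w | EwSet n (k n) w 0 = ExSet n (k n) 0 ∧
            (∀ j : ZMod n, (symmDiff (EwSet n (k n) w j) (ExSet n (k n) j)).ncard ≤ 1) ∧
            (∀ j : ZMod n, s(j, j + (k n : ZMod n) + 1) ∉ wEdgeSet n w)})
      atTop (nhds 1) := by
  classical
  obtain ⟨η, hη0, hηev⟩ := hη
  -- `k n` is eventually at most `n ^ c` for any `c > 0`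
  have hkpow : ∀ c : ℝ, 0 < c → ∀ᶠ n in atTop, (k n : ℝ) ≤ (n : ℝ) ^ c := by
    intro c hc
    have h1 : ∀ᶠ n in atTop, Real.log (k n) / Real.log n < c :=
      hlogk.eventually_lt_const hc
    filter_upwards [h1, hk, eventually_ge_atTop 2] with n hlt hkn hn2
    have hn1 : (1 : ℝ) < (n : ℝ) := by exact_mod_cast hn2
    have hlogn : 0 < Real.log n := Real.log_pos hn1
    have hk1 : (1 : ℝ) ≤ (k n : ℝ) := by exact_mod_cast hkn.1
    have hlog : Real.log (k n) < c * Real.log n := by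
      rw [div_lt_iff₀ hlogn] at hlt; linarith
    have := (Real.lt_rpow_iff_log_lt (by linarith) (by linarith)).mpr hlog
    linarith
  -- eventually `2 * k n + 2 ≤ n`
  have hksmall : ∀ᶠ n in atTop, 2 * k n + 2 ≤ n := by
    filter_upwards [hkpow (1/2) (by norm_num), eventually_ge_atTop 16, hk]
      with n h1 h16 hkn
    have h16' : (16 : ℝ) ≤ (n : ℝ) := by exact_mod_cast h16
    have hs4 : (4 : ℝ) ≤ Real.sqrt n := by
      have h := Real.sqrt_le_sqrt h16'
      rwa [show (16 : ℝ) = 4 ^ 2 by norm_num, Real.sqrt_sq (by norm_num)] at h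
    have hsq : Real.sqrt n * Real.sqrt n = (n : ℝ) := Real.mul_self_sqrt (by positivity)
    have hrs : ((n : ℝ)) ^ ((1 : ℝ)/2) = Real.sqrt n := (Real.sqrt_eq_rpow _).symm
    rw [hrs] at h1
    have hkr : (k n : ℝ) ≤ (n : ℝ)/4 := by nlinarith
    have h4k : 4 * k n ≤ n := by
      have : (4 * k n : ℝ) ≤ (n : ℝ) := by push_cast; linarith
      exact_mod_cast this
    omega
  set δ : ℝ := min (1/2 : ℝ) (3 * η / 2) with hδdef
  have hδ0 : 0 < δ := lt_min (by norm_num) (by linarith)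
  have hδ1 : δ ≤ 1/2 := min_le_left _ _
  have hδ2 : δ ≤ 3 * η / 2 := min_le_right _ _
  -- the numeric error bound tends to zero
  have hglim : Tendsto (fun n : ℕ => 32 * (k n : ℝ) ^ 2 * ε n
      + (n : ℝ) * (32 * (k n : ℝ) ^ 2 * ε n) ^ 2 + 4 * (k n : ℝ) * ε n) atTop (nhds 0) := by
    have hb : Tendsto (fun n : ℕ => 1060 * ((n : ℝ)) ^ (-δ)) atTop (nhds 0) := by
      have h := ((tendsto_rpow_neg_atTop hδ0).comp
        (tendsto_natCast_atTop_atTop (R := ℝ))).const_mul (1060 : ℝ)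
      simpa using h
    apply squeeze_zero' ?_ ?_ hb
    · filter_upwards [hk] with n hkn
      have hε0 := (hε01 n).1
      positivity
    · filter_upwards [hkpow (η/8) (by linarith), hηev, eventually_ge_atTop 1, hk]
        with n hkn hεn hn1 hkk
      have hx : (1 : ℝ) ≤ (n : ℝ) := by exact_mod_cast hn1
      have hε0 := (hε01 n).1
      have hk0 : (0 : ℝ) ≤ (k n : ℝ) := by positivity
      have hksq : ((k n : ℝ)) ^ 2 ≤ (n : ℝ) ^ (η/8 + η/8) := by
        rw [sq]
        exact SmallWorldAux.rpow_mul_le hx hk0 hk0 hkn hkn le_rfl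
      have ht1 : (k n : ℝ) ^ 2 * ε n ≤ (n : ℝ) ^ (-δ) := by
        apply SmallWorldAux.rpow_mul_le hx (by positivity) hε0 hksq hεn
        linarith
      have ht3 : (k n : ℝ) * ε n ≤ (n : ℝ) ^ (-δ) := by
        apply SmallWorldAux.rpow_mul_le hx hk0 hε0 hkn hεn
        linarith
      have hfac : (k n : ℝ) ^ 2 * ε n ≤ (n : ℝ) ^ ((η/8 + η/8) + (-(1/2 : ℝ) - η)) :=
        SmallWorldAux.rpow_mul_le hx (by positivity) hε0 hksq hεn le_rfl
      have ht2 : (n : ℝ) * ((k n : ℝ) ^ 2 * ε n) ^ 2 ≤ (n : ℝ) ^ (-δ) := by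
        have hsq2 : ((k n : ℝ) ^ 2 * ε n) ^ 2 ≤
            (n : ℝ) ^ (((η/8 + η/8) + (-(1/2 : ℝ) - η)) + ((η/8 + η/8) + (-(1/2 : ℝ) - η))) := by
          rw [sq]
          exact SmallWorldAux.rpow_mul_le hx (by positivity) (by positivity) hfac hfac le_rfl
        have hn' : (n : ℝ) ≤ (n : ℝ) ^ (1 : ℝ) := by rw [Real.rpow_one]
        apply SmallWorldAux.rpow_mul_le hx (by positivity) (by positivity) hn' hsq2
        linarith
      nlinarith [ht1, ht2, ht3]
  have hofR : Tendsto (fun n : ℕ => ENNReal.ofReal (32 * (k n : ℝ) ^ 2 * ε n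
      + (n : ℝ) * (32 * (k n : ℝ) ^ 2 * ε n) ^ 2 + 4 * (k n : ℝ) * ε n)) atTop (nhds 0) := by
    have h := ENNReal.tendsto_ofReal hglim
    simpa using h
  have hlower : Tendsto (fun n : ℕ => 1 - ENNReal.ofReal (32 * (k n : ℝ) ^ 2 * ε n
      + (n : ℝ) * (32 * (k n : ℝ) ^ 2 * ε n) ^ 2 + 4 * (k n : ℝ) * ε n)) atTop (nhds 1) := by
    have h := ENNReal.Tendsto.sub (tendsto_const_nhds (x := (1 : ℝ≥0∞)))
      hofR (Or.inl ENNReal.one_ne_top)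
    simpa using h
  apply tendsto_of_tendsto_of_tendsto_of_le_of_le' hlower tendsto_const_nhds
  · filter_upwards [hksmall, hk] with n hn hkn
    have h := SmallWorldAux.main_bound n (k n) (ε n) hn hkn.1 (hε01 n).1 (hε01 n).2
    exact tsub_le_iff_right.mpr h
  · filter_upwards [hksmall, hk] with n hn hkn
    exact SmallWorldAux.prob_le_one' n (k n) (ε n) hn hkn.1 (hε01 n).1 (hε01 n).2 _

end
end
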